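/- arXiv:2012.15395 — 9 statements merged into one kernel-verified Lean document; each statement's English description precedes it below -/
import Mathlib

section
/- Every finitely presentable group admits a reduced finite presentation. Precisely: let S be a finite set, R a finite subset of the free group on S, and G = ⟨S ∣ R⟩. Then there exist a finite set S' and a finite subset R' of the free group on S' such that the presented group G' = ⟨S' ∣ R'⟩ (with quotient map φ' : FreeGroup S' → G') is isomorphic to G, φ'(s) ≠ 1 for every s ∈ S', and for every r ∈ R' and all 1 ≤ i ≤ j ≤ L(r), if φ'(r[i,j]) = 1 then i = 1 and j = L(r). -/
/-- The length `L(r)` of the reduced word of an element of a free group. -/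
def wordLength {S : Type*} [DecidableEq S] (r : FreeGroup S) : ℕ :=
  (FreeGroup.toWord r).length

/-- The subword `r[i,j]` of `r`: the element of the free group given by the product of the
`i`-th through `j`-th letters (1-indexed) of the reduced word of `r`. -/
def subword {S : Type*} [DecidableEq S] (r : FreeGroup S) (i j : ℕ) : FreeGroup S :=
  FreeGroup.mk (((FreeGroup.toWord r).drop (i - 1)).take (j - i + 1))

/-- The quotient map `φ : FreeGroup S → ⟨S ∣ R⟩`. -/
def presentMap {S : Type*} (R : Set (FreeGroup S)) : FreeGroup S →* PresentedGroup R :=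
  PresentedGroup.mk R

namespace ReducedPres

open FreeGroup

section Words

variable {S : Type*} [DecidableEq S]

theorem presentMap_eq_one_iff {R : Set (FreeGroup S)} {x : FreeGroup S} :
    presentMap R x = 1 ↔ x ∈ Subgroup.normalClosure R :=
  QuotientGroup.eq_one_iff x

theorem wordLength_mk_le (L : List (S × Bool)) : wordLength (mk L) ≤ L.length := by
  simpa [wordLength, toWord_mk] using (Red.length_le (reduce.red (L := L)))

theorem wordLength_mul_le (x y : FreeGroup S) :
    wordLength (x * y) ≤ wordLength x + wordLength y := by
  simpa [wordLength] using (toWord_mul_sublist x y).length_le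

theorem wordLength_inv (x : FreeGroup S) : wordLength x⁻¹ = wordLength x := by
  simp [wordLength, toWord_inv, invRev_length]

theorem reduce_infix' {L L' : List (S × Bool)} (h : L' <:+: L)
    (hL : reduce L = L) : reduce L' = L' := by
  by_contra hne
  rcases (Relation.ReflTransGen.cases_head (reduce.red (L := L'))) with heq | ⟨c, hstep, -⟩
  · exact hne heq.symm
  · cases hstep with
    | @not l1 l2 x b =>
      obtain ⟨u, v, huv⟩ := h
      exact reduce.not (L₂ := u ++ l1) (L₃ := l2 ++ v) (x := x) (b := b)
        (by rw [hL, ← huv]; simp)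

theorem subword_split (r : FreeGroup S) {i j : ℕ} (h1 : 1 ≤ i) (hij : i ≤ j)
    (hj : j ≤ wordLength r) :
    mk ((toWord r).take (i-1)) * subword r i j * mk ((toWord r).drop j) = r := by
  rw [subword, mul_mk, mul_mk]
  conv_rhs => rw [← mk_toWord (x := r)]
  congr 1
  rw [List.append_assoc]
  conv_rhs => rw [← List.take_append_drop (i-1) (toWord r)]
  congr 1
  conv_rhs => rw [← List.take_append_drop (j-i+1) ((toWord r).drop (i-1)), List.drop_drop]
  rw [show i - 1 + (j - i + 1) = j from by omega]

theorem subword_reduced (r : FreeGroup S) {i j : ℕ} :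
    reduce (((toWord r).drop (i - 1)).take (j - i + 1)) =
      ((toWord r).drop (i - 1)).take (j - i + 1) :=
  reduce_infix' (((List.take_prefix _ _).isInfix).trans ((List.drop_suffix _ _).isInfix))
    (reduce_toWord r)

theorem wordLength_subword (r : FreeGroup S) {i j : ℕ} (h1 : 1 ≤ i) (hij : i ≤ j)
    (hj : j ≤ wordLength r) : wordLength (subword r i j) = j - i + 1 := by
  rw [subword, wordLength, toWord_mk, subword_reduced, List.length_take, List.length_drop]
  have : j ≤ (toWord r).length := hj
  omega

end Words

section Replace

variable {S : Type*} [DecidableEq S]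

variable (R : Set (FreeGroup S)) (r : FreeGroup S) (i j : ℕ)

/-- The new relator set after splitting the relator `r` at subword `[i,j]`. -/
def newRels : Set (FreeGroup S) :=
  (R \ {r}) ∪ {subword r i j,
    mk ((toWord r).take (i-1)) * mk ((toWord r).drop j)}

variable {R r i j}

theorem newRels_finite (hR : R.Finite) : (newRels R r i j).Finite :=
  (hR.diff).union ((Set.finite_singleton _).insert _)

theorem normalClosure_newRels (hr : r ∈ R) (h1 : 1 ≤ i) (hij : i ≤ j)
    (hj : j ≤ wordLength r) (hsub : presentMap R (subword r i j) = 1) :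
    Subgroup.normalClosure (newRels R r i j) = Subgroup.normalClosure R := by
  set p := mk ((toWord r).take (i-1)) with hp
  set w := subword r i j with hw
  set q := mk ((toWord r).drop j) with hq
  have hsplit : p * w * q = r := subword_split r h1 hij hj
  have hwmem : w ∈ Subgroup.normalClosure R := presentMap_eq_one_iff.mp hsub
  apply le_antisymm
  · apply Subgroup.normalClosure_le_normal
    rintro x (⟨hx, -⟩ | hx)
    · exact Subgroup.subset_normalClosure hx
    · rcases hx with rfl | rfl
      · exact hwmem
      · have : p * q = p * w⁻¹ * p⁻¹ * r := by rw [← hsplit]; group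
        rw [this]
        exact mul_mem ((Subgroup.normalClosure_normal).conj_mem _ (inv_mem hwmem) p)
          (Subgroup.subset_normalClosure hr)
  · apply Subgroup.normalClosure_le_normal
    set N := Subgroup.normalClosure (newRels R r i j) with hN
    intro x hx
    have hwm : w ∈ newRels R r i j := Set.mem_union_right _ (Set.mem_insert _ _)
    have hpqm : p * q ∈ newRels R r i j :=
      Set.mem_union_right _ (Set.mem_insert_of_mem _ rfl)
    by_cases hxr : x = r
    · subst hxr
      show x ∈ N
      rw [← hsplit, show p * w * q = p * w * p⁻¹ * (p * q) from by group]
      exact mul_mem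
        ((Subgroup.normalClosure_normal).conj_mem _
          (Subgroup.subset_normalClosure hwm) p)
        (Subgroup.subset_normalClosure hpqm)
    · exact Subgroup.subset_normalClosure (Set.mem_union_left _ ⟨hx, hxr⟩)

theorem sum_newRels_lt (hR : R.Finite) (hr : r ∈ R) (h1 : 1 ≤ i) (hij : i ≤ j)
    (hj : j ≤ wordLength r) (hne : ¬(i = 1 ∧ j = wordLength r)) :
    ((newRels_finite (i := i) (j := j) (r := r) hR).toFinset.sum fun x => 3 ^ wordLength x) <
      hR.toFinset.sum fun x => 3 ^ wordLength x := by
  set p := mk ((toWord r).take (i-1)) with hp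
  set w := subword r i j with hw
  set q := mk ((toWord r).drop j) with hq
  set n := wordLength r with hn
  have hn1 : 1 ≤ n := le_trans h1 (le_trans hij hj)
  have hlw : wordLength w = j - i + 1 := wordLength_subword r h1 hij hj
  have hlwle : wordLength w ≤ n - 1 := by omega
  have hlp : wordLength p ≤ i - 1 := by
    refine le_trans (wordLength_mk_le _) ?_
    rw [List.length_take]; omega
  have hlq : wordLength q ≤ n - j := by
    refine le_trans (wordLength_mk_le _) ?_
    rw [List.length_drop]
    exact Nat.sub_le_sub_right (Nat.le_of_eq rfl) j
  have hlpq : wordLength (p * q) ≤ n - 1 := by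
    have := wordLength_mul_le p q; omega
  -- key numeric inequality
  have h3pos : 0 < 3 ^ (n - 1) := Nat.pow_pos (by norm_num)
  have hkey : 3 ^ wordLength w + 3 ^ wordLength (p * q) < 3 ^ n := by
    have e : 3 ^ (n - 1) * 3 = 3 ^ n := by
      rw [← pow_succ]; congr 1; omega
    have b1 : 3 ^ wordLength w ≤ 3 ^ (n - 1) := Nat.pow_le_pow_right (by norm_num) hlwle
    have b2 : 3 ^ wordLength (p * q) ≤ 3 ^ (n - 1) := Nat.pow_le_pow_right (by norm_num) hlpq
    omega
  have hrF : r ∈ hR.toFinset := hR.mem_toFinset.mpr hr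
  have hsum : (hR.toFinset.erase r).sum (fun x => 3 ^ wordLength x) + 3 ^ n =
      hR.toFinset.sum fun x => 3 ^ wordLength x := Finset.sum_erase_add _ _ hrF
  have hsub2 : (newRels_finite (i := i) (j := j) (r := r) hR).toFinset ⊆
      insert w (insert (p * q) (hR.toFinset.erase r)) := by
    intro x hx
    rw [Set.Finite.mem_toFinset] at hx
    rcases hx with ⟨hx, hxr⟩ | hx
    · simp only [Finset.mem_insert, Finset.mem_erase]
      exact Or.inr (Or.inr ⟨hxr, hR.mem_toFinset.mpr hx⟩)
    · rcases hx with rfl | rfl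
      · exact Finset.mem_insert_self _ _
      · exact Finset.mem_insert_of_mem (Finset.mem_insert_self _ _)
  refine lt_of_le_of_lt (Finset.sum_le_sum_of_subset hsub2) ?_
  have hins : ∀ (a : FreeGroup S) (t : Finset (FreeGroup S)),
      (insert a t).sum (fun x => 3 ^ wordLength x) ≤
        3 ^ wordLength a + t.sum (fun x => 3 ^ wordLength x) := by
    intro a t
    by_cases ha : a ∈ t
    · rw [Finset.insert_eq_self.mpr ha]; exact Nat.le_add_left _ _
    · rw [Finset.sum_insert ha]
  refine lt_of_le_of_lt (le_trans (hins _ _) (Nat.add_le_add_left (hins _ _) _)) ?_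
  omega

end Replace


section Tietze

variable {S : Type*} [DecidableEq S]

variable (s : S) in
/-- The homomorphism killing the generator `s`. -/
def killHom : FreeGroup S →* FreeGroup {t : S // t ≠ s} :=
  FreeGroup.lift (fun t => if h : t = s then 1 else FreeGroup.of ⟨t, h⟩)

variable (s : S) in
def inclHom : FreeGroup {t : S // t ≠ s} →* FreeGroup S :=
  FreeGroup.lift (fun t' => FreeGroup.of t'.val)

variable {R : Set (FreeGroup S)} {s : S}

theorem killHom_key (hs : presentMap R (FreeGroup.of s) = 1) :
    (presentMap R).comp ((inclHom s).comp (killHom s)) = presentMap R := by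
  apply FreeGroup.ext_hom
  intro t
  by_cases h : t = s
  · subst h
    simp [killHom, inclHom, hs]
  · simp only [MonoidHom.comp_apply, killHom, inclHom, FreeGroup.lift_apply_of, dif_neg h]

theorem wordLength_le_of_le_one {S' : Type*} [DecidableEq S'] (h : FreeGroup S →* FreeGroup S')
    (hh : ∀ t, wordLength (h (FreeGroup.of t)) ≤ 1) (x : FreeGroup S) :
    wordLength (h x) ≤ wordLength x := by
  have key : ∀ L : List (S × Bool), wordLength (h (mk L)) ≤ L.length := by
    intro L
    induction L with
    | nil => simp [← one_eq_mk, wordLength, toWord_one]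
    | cons a L ih =>
      have : mk (a :: L) = mk [a] * mk L := by rw [mul_mk]; rfl
      rw [this, MonoidHom.map_mul]
      refine le_trans (wordLength_mul_le _ _) ?_
      have ha : wordLength (h (mk [a])) ≤ 1 := by
        obtain ⟨t, b⟩ := a
        cases b
        · have : mk [(t, false)] = (FreeGroup.of t)⁻¹ := by
            rw [show (FreeGroup.of t : FreeGroup S) = mk [(t, true)] from rfl, inv_mk]
            rfl
          rw [this, MonoidHom.map_inv, wordLength_inv]
          exact hh t
        · exact hh t
      have := Nat.add_le_add ha ih
      simp only [List.length_cons]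
      omega
  calc wordLength (h x) = wordLength (h (mk (toWord x))) := by rw [mk_toWord]
    _ ≤ (toWord x).length := key _
    _ = wordLength x := rfl

theorem wordLength_killHom_le (x : FreeGroup S) :
    wordLength (killHom s x) ≤ wordLength x := by
  refine wordLength_le_of_le_one _ (fun t => ?_) x
  by_cases h : t = s
  · subst h; simp [killHom, wordLength, toWord_one]
  · simp [killHom, dif_neg h, wordLength, toWord_of]

theorem kill_equiv (hs : presentMap R (FreeGroup.of s) = 1) :
    Nonempty (PresentedGroup (killHom s '' R) ≃* PresentedGroup R) := by
  set f := killHom s with hf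
  set g := inclHom s with hg
  have hα : ∀ r ∈ R,
      FreeGroup.lift (fun t => PresentedGroup.mk (f '' R) (f (FreeGroup.of t))) r = 1 := by
    have hlift : FreeGroup.lift (fun t => PresentedGroup.mk (f '' R) (f (FreeGroup.of t))) =
        (PresentedGroup.mk (f '' R)).comp f := by
      apply FreeGroup.ext_hom; intro t; simp
    intro r hr
    rw [hlift, MonoidHom.comp_apply]
    exact (QuotientGroup.eq_one_iff _).mpr
      (Subgroup.subset_normalClosure ⟨r, hr, rfl⟩)
  have hβ : ∀ x ∈ f '' R,
      FreeGroup.lift (fun t' : {t : S // t ≠ s} =>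
        PresentedGroup.mk R (FreeGroup.of t'.val)) x = 1 := by
    have hlift : FreeGroup.lift (fun t' : {t : S // t ≠ s} =>
        PresentedGroup.mk R (FreeGroup.of t'.val)) = (PresentedGroup.mk R).comp g := by
      apply FreeGroup.ext_hom; intro t'; simp [hg, inclHom]
    rintro x ⟨r, hr, rfl⟩
    rw [hlift, MonoidHom.comp_apply]
    have := DFunLike.congr_fun (killHom_key hs) r
    simp only [MonoidHom.comp_apply] at this
    rw [show (g (f r) : FreeGroup S) = (inclHom s) ((killHom s) r) from rfl]
    calc PresentedGroup.mk R ((inclHom s) ((killHom s) r)) = presentMap R r := this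
      _ = 1 := presentMap_eq_one_iff.mpr (Subgroup.subset_normalClosure hr)
  set α : PresentedGroup R →* PresentedGroup (f '' R) := PresentedGroup.toGroup hα with hαd
  set β : PresentedGroup (f '' R) →* PresentedGroup R := PresentedGroup.toGroup hβ with hβd
  have hβmk : β.comp (PresentedGroup.mk (f '' R)) = (PresentedGroup.mk R).comp g := by
    apply FreeGroup.ext_hom; intro t'
    exact PresentedGroup.toGroup.of hβ
  have hαmk : α.comp (PresentedGroup.mk R) = (PresentedGroup.mk (f '' R)).comp f := by
    apply FreeGroup.ext_hom; intro t
    exact PresentedGroup.toGroup.of hα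
  have h₁ : β.comp α = MonoidHom.id _ := by
    apply PresentedGroup.ext
    intro t
    have e1 : α (PresentedGroup.of t) = PresentedGroup.mk (f '' R) (f (FreeGroup.of t)) :=
      PresentedGroup.toGroup.of hα
    have e2 : β (PresentedGroup.mk (f '' R) (f (FreeGroup.of t))) =
        PresentedGroup.mk R (g (f (FreeGroup.of t))) :=
      DFunLike.congr_fun hβmk (f (FreeGroup.of t))
    have e3 := DFunLike.congr_fun (killHom_key hs) (FreeGroup.of t)
    simp only [MonoidHom.comp_apply] at e3
    simp only [MonoidHom.comp_apply, MonoidHom.id_apply, e1, e2]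
    exact e3
  have h₂ : α.comp β = MonoidHom.id _ := by
    apply PresentedGroup.ext
    intro t'
    have e1 : β (PresentedGroup.of t') = PresentedGroup.mk R (FreeGroup.of t'.val) :=
      PresentedGroup.toGroup.of hβ
    have e2 : α (PresentedGroup.mk R (FreeGroup.of t'.val)) =
        PresentedGroup.mk (f '' R) (f (FreeGroup.of t'.val)) :=
      DFunLike.congr_fun hαmk (FreeGroup.of t'.val)
    have e3 : f (FreeGroup.of t'.val) = FreeGroup.of t' := by
      simp [hf, killHom, dif_neg t'.prop]
    simp only [MonoidHom.comp_apply, MonoidHom.id_apply, e1, e2, e3]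
    rfl
  exact ⟨(MonoidHom.toMulEquiv α β h₁ h₂).symm⟩

end Tietze


theorem finset_sum_image_le {β γ : Type*} [DecidableEq γ] (t : Finset β) (f : β → γ)
    (g : γ → ℕ) : (t.image f).sum g ≤ t.sum (fun b => g (f b)) := by
  classical
  induction t using Finset.induction_on with
  | empty => simp
  | @insert a t ha ih =>
    rw [Finset.image_insert, Finset.sum_insert ha]
    by_cases h : f a ∈ t.image f
    · rw [Finset.insert_eq_self.mpr h]
      exact le_trans ih (Nat.le_add_left _ _)
    · rw [Finset.sum_insert h]
      exact Nat.add_le_add_left ih _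

def Concl (S : Type) (R : Set (FreeGroup S)) : Prop :=
  ∃ (S' : Type) (_ : Finite S') (_ : DecidableEq S') (R' : Set (FreeGroup S')),
      R'.Finite ∧
      Nonempty (PresentedGroup R' ≃* PresentedGroup R) ∧
      (∀ s : S', presentMap R' (FreeGroup.of s) ≠ 1) ∧
      (∀ r ∈ R', ∀ i j : ℕ, 1 ≤ i → i ≤ j → j ≤ wordLength r →
        presentMap R' (subword r i j) = 1 → i = 1 ∧ j = wordLength r)

set_option maxHeartbeats 2000000 in
theorem main : ∀ (n : ℕ) (S : Type) (_ : Finite S) (_ : DecidableEq S)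
    (R : Set (FreeGroup S)) (hR : R.Finite),
    Nat.card S + hR.toFinset.sum (fun x => 3 ^ wordLength x) ≤ n → Concl S R := by
  intro n
  induction n using Nat.strong_induction_on with
  | _ n ih =>
    intro S _ _ R hR hmeas
    by_cases hgen : ∃ s : S, presentMap R (FreeGroup.of s) = 1
    · obtain ⟨s, hs⟩ := hgen
      have hR₂ : ((killHom s) '' R).Finite := hR.image _
      have hcard : Nat.card {t : S // t ≠ s} < Nat.card S :=
        Finite.card_subtype_lt (x := s) (by simp)
      have hsum : hR₂.toFinset.sum (fun x => 3 ^ wordLength x) ≤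
          hR.toFinset.sum (fun x => 3 ^ wordLength x) := by
        have h1 : hR₂.toFinset = hR.toFinset.image (killHom s) := by
          ext x; simp [Set.Finite.mem_toFinset]
        rw [h1]
        refine le_trans (finset_sum_image_le _ _ _) ?_
        exact Finset.sum_le_sum (fun x _ => Nat.pow_le_pow_right (by norm_num)
          (wordLength_killHom_le x))
      have hm2 : Nat.card {t : S // t ≠ s} + hR₂.toFinset.sum (fun x => 3 ^ wordLength x)
          < n := by omega
      obtain ⟨S'', F'', D'', R'', hfin, ⟨e⟩, hgen'', hrel''⟩ :=
        ih _ hm2 _ inferInstance inferInstance _ hR₂ le_rfl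
      exact ⟨S'', F'', D'', R'', hfin, ⟨e.trans (kill_equiv hs).some⟩, hgen'', hrel''⟩
    · by_cases hrel : ∃ r ∈ R, ∃ i j : ℕ, 1 ≤ i ∧ i ≤ j ∧ j ≤ wordLength r ∧
          presentMap R (subword r i j) = 1 ∧ ¬(i = 1 ∧ j = wordLength r)
      · obtain ⟨r, hr, i, j, h1, hij, hj, hsub, hne⟩ := hrel
        have hfin2 := newRels_finite (R := R) (r := r) (i := i) (j := j) hR
        have hlt := sum_newRels_lt hR hr h1 hij hj hne
        have hm2 : Nat.card S + hfin2.toFinset.sum (fun x => 3 ^ wordLength x) < n := by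
          omega
        obtain ⟨S'', F'', D'', R'', hfin, ⟨e⟩, hgen'', hrel''⟩ :=
          ih _ hm2 _ ‹Finite S› ‹DecidableEq S› _ hfin2 le_rfl
        have heq : Subgroup.normalClosure (newRels R r i j) = Subgroup.normalClosure R :=
          normalClosure_newRels hr h1 hij hj hsub
        exact ⟨S'', F'', D'', R'', hfin,
          ⟨e.trans (QuotientGroup.quotientMulEquivOfEq heq)⟩, hgen'', hrel''⟩
      · push_neg at hgen hrel
        exact ⟨S, ‹_›, ‹_›, R, hR, ⟨MulEquiv.refl _⟩, hgen,
          fun r hr i j h1 hij hj hsub => hrel r hr i j h1 hij hj hsub⟩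

end ReducedPres

set_option maxHeartbeats 1000000 in
/-- Every finitely presentable group admits a reduced finite presentation:
given a finite presentation `⟨S ∣ R⟩`, there is a finite presentation `⟨S' ∣ R'⟩` of an
isomorphic group such that no generator maps to the identity and for every relator `r` the
only subword `r[i,j]` (with `1 ≤ i ≤ j ≤ L(r)`) mapping to the identity is `r` itself. -/
theorem exists_reduced_presentation (S : Type) [Finite S]
    (R : Set (FreeGroup S)) (hR : R.Finite) :
    ∃ (S' : Type) (_ : Finite S') (_ : DecidableEq S') (R' : Set (FreeGroup S')),
      R'.Finite ∧
      Nonempty (PresentedGroup R' ≃* PresentedGroup R) ∧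
      (∀ s : S', presentMap R' (FreeGroup.of s) ≠ 1) ∧
      (∀ r ∈ R', ∀ i j : ℕ, 1 ≤ i → i ≤ j → j ≤ wordLength r →
        presentMap R' (subword r i j) = 1 → i = 1 ∧ j = wordLength r) := by
  letI : DecidableEq S := Classical.decEq S
  exact ReducedPres.main (Nat.card S + hR.toFinset.sum (fun x => 3 ^ wordLength x))
    S ‹_› ‹_› R hR le_rfl
end

section
/- Let X be a topological space that is path-connected, simply connected, and locally path-connected, and let a group G act on X by homeomorphisms such that every point x ∈ X has an open neighborhood U with (g • U) ∩ U = ∅ for every g ≠ 1 in G. Then for any x ∈ X, the fundamental group of the orbit space X/G (the quotient of X by the orbit equivalence relation, with the quotient topology) based at the class of x is isomorphic to G. -/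
open Pointwise Set

open Pointwise Set

-- generic pasting lemma
theorem pasteCO {α β : Type*} [TopologicalSpace α] [TopologicalSpace β] {A B : Set α}
    {f g : α → β} [∀ p, Decidable (p ∈ A)] (hA : IsClosed A) (hB : IsClosed B)
    (hf : ContinuousOn f A) (hg : ContinuousOn g B) (heq : Set.EqOn f g (A ∩ B)) :
    ContinuousOn (fun x => if x ∈ A then f x else g x) (A ∪ B) := by
  set h : α → β := fun x => if x ∈ A then f x else g x with hh
  have hfA : Set.EqOn h f A := fun p hp => if_pos hp
  have hgB : Set.EqOn h g B := fun p hp => by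
    by_cases hpA : p ∈ A
    · simp only [hh, if_pos hpA]; exact heq ⟨hpA, hp⟩
    · simp only [hh, if_neg hpA]
  intro p hp
  have bot : ∀ C : Set α, IsClosed C → p ∉ C → nhdsWithin p C = ⊥ := by
    intro C hC hpC
    rw [← Filter.not_neBot, ← mem_closure_iff_nhdsWithin_neBot, hC.closure_eq]
    exact hpC
  have tA : Filter.Tendsto h (nhdsWithin p A) (nhds (h p)) := by
    by_cases hpA : p ∈ A
    · have := (hf p hpA).congr hfA (hfA hpA)
      exact this
    · rw [bot A hA hpA]; exact Filter.tendsto_bot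
  have tB : Filter.Tendsto h (nhdsWithin p B) (nhds (h p)) := by
    by_cases hpB : p ∈ B
    · have hpv : h p = g p := hgB hpB
      have := (hg p hpB).congr hgB hpv
      exact this
    · rw [bot B hB hpB]; exact Filter.tendsto_bot
  rw [ContinuousWithinAt, nhdsWithin_union]
  exact Filter.tendsto_sup.2 ⟨tA, tB⟩



lemma grid_lt {n i i' j j' : ℕ} (hi : i < n) (h : i' + j' * n < i + j * n) :
    j' < j ∨ (j' = j ∧ i' < i) := by
  rcases lt_trichotomy j' j with h1 | h1 | h1
  · left; exact h1
  · right; subst h1; exact ⟨rfl, by omega⟩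
  · exfalso
    have h3 : (j + 1) * n ≤ j' * n := Nat.mul_le_mul_right n h1
    have : i + j * n < i' + j' * n := by
      calc i + j * n < n + j * n := by omega
      _ = (j + 1) * n := by ring
      _ ≤ j' * n := h3
      _ ≤ i' + j' * n := by omega
    omega

lemma grid_cover {n : ℕ} (hn : 0 < n) {a : ℝ} (ha : a ∈ Set.Icc (0:ℝ) 1) :
    ∃ i : ℕ, i < n ∧ (i:ℝ)/n ≤ a ∧ a ≤ ((i:ℝ)+1)/n := by
  have hnR : (0:ℝ) < n := Nat.cast_pos.2 hn
  have h0 : 0 ≤ a * n := mul_nonneg ha.1 hnR.le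
  by_cases h : ⌊a * n⌋₊ < n
  · refine ⟨⌊a*n⌋₊, h, ?_, ?_⟩
    · rw [div_le_iff₀ hnR]; exact Nat.floor_le h0
    · rw [le_div_iff₀ hnR]
      have := Nat.lt_floor_add_one (a*n)
      linarith
  · have hcast : ((n-1:ℕ):ℝ) = (n:ℝ) - 1 := by
      push_cast [Nat.cast_sub hn]; ring
    refine ⟨n-1, by omega, ?_, ?_⟩
    · rw [div_le_iff₀ hnR, hcast]
      have h1 : (n:ℝ) ≤ ⌊a*n⌋₊ := by exact_mod_cast Nat.le_of_not_lt h
      have h2 : (⌊a*n⌋₊:ℝ) ≤ a*n := Nat.floor_le h0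
      linarith
    · rw [le_div_iff₀ hnR, hcast]
      have := ha.2
      nlinarith

namespace OrbitCover

variable {X : Type*} [TopologicalSpace X] {G : Type*} [Group G] [MulAction G X]

/-- quotient map to the orbit space -/
abbrev qm (G : Type*) [Group G] [MulAction G X] : X → Quotient (MulAction.orbitRel G X) :=
  Quotient.mk (MulAction.orbitRel G X)

lemma qm_smul (g : G) (a : X) : qm G (g • a) = qm G a :=
  Quotient.sound (MulAction.orbitRel_apply.2 (MulAction.mem_orbit a g))

lemma qm_eq_iff {a b : X} : qm G a = qm G b ↔ ∃ g : G, g • b = a := by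
  constructor
  · intro h
    exact MulAction.orbitRel_apply.1 (Quotient.exact h)
  · rintro ⟨g, rfl⟩
    exact qm_smul g b

lemma continuous_qm : Continuous (qm G (X := X)) := continuous_quotient_mk'

variable (hcont : ∀ g : G, Continuous fun x : X => g • x)
variable (hdisc : ∀ x : X, ∃ U : Set X, IsOpen U ∧ x ∈ U ∧ ∀ g : G, g ≠ 1 → (g • U) ∩ U = ∅)

lemma isOpen_smul_set (hc : ∀ g : G, Continuous fun x : X => g • x) {U : Set X} (hU : IsOpen U)
    (g : G) : IsOpen (g • U) := by
  have : g • U = (fun x : X => g⁻¹ • x) ⁻¹' U := by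
    ext a; exact Set.mem_smul_set_iff_inv_smul_mem
  rw [this]
  exact hU.preimage (hc g⁻¹)

lemma preimage_qm_image (U : Set X) :
    qm G ⁻¹' (qm G '' U) = ⋃ g : G, g • U := by
  ext a
  simp only [Set.mem_preimage, Set.mem_image, Set.mem_iUnion]
  constructor
  · rintro ⟨b, hb, hqb⟩
    obtain ⟨g, rfl⟩ := qm_eq_iff.1 hqb.symm
    exact ⟨g, Set.smul_mem_smul_set hb⟩
  · rintro ⟨g, ha⟩
    obtain ⟨b, hb, rfl⟩ := ha
    exact ⟨b, hb, (qm_smul g b).symm⟩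

lemma isOpenMap_qm (hc : ∀ g : G, Continuous fun x : X => g • x) :
    IsOpenMap (qm G (X := X)) := by
  intro U hU
  rw [isOpen_coinduced (f := qm G)]  -- quotient topology
  rw [preimage_qm_image]
  exact isOpen_iUnion fun g => isOpen_smul_set hc hU g

/-- A properly discontinuous neighborhood -/
def IsPD (U : Set X) : Prop := IsOpen U ∧ ∀ g : G, g ≠ 1 → (g • U) ∩ U = ∅

lemma free (hd : ∀ x : X, ∃ U : Set X, IsOpen U ∧ x ∈ U ∧ ∀ g : G, g ≠ 1 → (g • U) ∩ U = ∅)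
    {g : G} {a : X} (h : g • a = a) : g = 1 := by
  by_contra hg
  obtain ⟨U, _, haU, hdis⟩ := hd a
  have : a ∈ (g • U) ∩ U := ⟨h ▸ Set.smul_mem_smul_set haU, haU⟩
  rw [hdis g hg] at this
  exact this

lemma IsPD.injOn {U : Set X} (hP : IsPD (G := G) U) : Set.InjOn (qm G) U := by
  intro a ha b hb hab
  obtain ⟨g, rfl⟩ := qm_eq_iff.1 hab
  by_cases hg : g = 1
  · rw [hg, one_smul]
  · exact absurd (Set.mem_inter (Set.smul_mem_smul_set hb) ha) (by rw [hP.2 g hg]; simp)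

lemma IsPD.sheets_disjoint {U : Set X} (hP : IsPD (G := G) U) {g h : G} (hgh : g ≠ h) :
    (g • U) ∩ (h • U) = ∅ := by
  have h1 : h⁻¹ * g ≠ 1 := by
    intro hc; exact hgh (eq_of_inv_mul_eq_one hc).symm
  ext a
  simp only [Set.mem_inter_iff, Set.mem_empty_iff_false, iff_false, not_and]
  intro hag hah
  have : h⁻¹ • a ∈ ((h⁻¹ * g) • U) ∩ U := by
    constructor
    · rw [Set.mem_smul_set_iff_inv_smul_mem] at hag ⊢
      rwa [mul_inv_rev, inv_inv, smul_smul, mul_assoc, mul_inv_cancel, mul_one]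
    · rwa [← Set.mem_smul_set_iff_inv_smul_mem]
  rw [hP.2 _ h1] at this
  exact this

lemma IsPD.injOn_sheet {U : Set X} (hP : IsPD (G := G) U) (g : G) :
    Set.InjOn (qm G) (g • U) := by
  intro a ha b hb hab
  rw [Set.mem_smul_set_iff_inv_smul_mem] at ha hb
  have := hP.injOn ha hb (by rw [qm_smul g⁻¹ a, qm_smul g⁻¹ b]; exact hab)
  have h2 := congrArg (fun z => g • z) this
  simpa [smul_smul] using h2

lemma IsPD.qm_image_sheet {U : Set X} (g : G) :
    qm G '' (g • U) = qm G '' U := by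
  ext y
  simp only [Set.mem_image]
  constructor
  · rintro ⟨a, ⟨b, hb, rfl⟩, rfl⟩
    exact ⟨b, hb, (qm_smul g b).symm⟩
  · rintro ⟨b, hb, rfl⟩
    exact ⟨g • b, Set.smul_mem_smul_set hb, qm_smul g b⟩


variable [Nonempty X]

lemma IsPD.exists_section (hc : ∀ g : G, Continuous fun x : X => g • x)
    {U : Set X} (hP : IsPD (G := G) U) (g : G) :
    ∃ s : Quotient (MulAction.orbitRel G X) → X,
      ContinuousOn s (qm G '' U) ∧ (∀ y ∈ qm G '' U, qm G (s y) = y ∧ s y ∈ g • U) ∧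
      (∀ p ∈ g • U, s (qm G p) = p) := by
  classical
  have himg : qm G '' (g • U) = qm G '' U := IsPD.qm_image_sheet (U := U) g
  set s : Quotient (MulAction.orbitRel G X) → X := fun y =>
    if h : y ∈ qm G '' (g • U) then h.choose else Classical.arbitrary X with hs
  have key : ∀ y ∈ qm G '' U, s y ∈ g • U ∧ qm G (s y) = y := by
    intro y hy
    rw [← himg] at hy
    rw [hs]; simp only [dif_pos hy]
    exact ⟨hy.choose_spec.1, hy.choose_spec.2⟩
  have hsec : ∀ p ∈ g • U, s (qm G p) = p := by
    intro p hp
    have hqp : qm G p ∈ qm G '' U := himg ▸ Set.mem_image_of_mem _ hp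
    obtain ⟨h1, h2⟩ := key _ hqp
    exact hP.injOn_sheet g h1 hp h2
  refine ⟨s, ?_, fun y hy => ⟨(key y hy).2, (key y hy).1⟩, hsec⟩
  intro y₀ hy₀
  rw [ContinuousWithinAt, (nhds_basis_opens (s y₀)).tendsto_right_iff]
  rintro V ⟨hsV, hVopen⟩
  have hNopen : IsOpen (qm G '' (V ∩ g • U)) :=
    isOpenMap_qm hc _ (hVopen.inter (isOpen_smul_set hc hP.1 g))
  have hy₀N : y₀ ∈ qm G '' (V ∩ g • U) :=
    ⟨s y₀, ⟨hsV, (key y₀ hy₀).1⟩, (key y₀ hy₀).2⟩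
  filter_upwards [inter_mem_nhdsWithin _ (hNopen.mem_nhds hy₀N),
    self_mem_nhdsWithin] with z hz hzU
  obtain ⟨_, ⟨w, ⟨hwV, hwgU⟩, rfl⟩⟩ := hz
  rw [hsec w hwgU]
  exact hwV

lemma smul_mem_smul_set' {U : Set X} {a : X} {g : G} (h : a ∈ g • U) (c : G) :
    c • a ∈ (c * g) • U := by
  rw [Set.mem_smul_set_iff_inv_smul_mem] at h ⊢
  rwa [mul_inv_rev, mul_smul, inv_smul_smul]

/-- Uniqueness of lifts on preconnected sets. -/
lemma lift_unique {α : Type*} [TopologicalSpace α]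
    (hc : ∀ g : G, Continuous fun x : X => g • x)
    (hd : ∀ x : X, ∃ U : Set X, IsOpen U ∧ x ∈ U ∧ ∀ g : G, g ≠ 1 → (g • U) ∩ U = ∅)
    {A : Set α} (hA : IsPreconnected A) {K : α → Quotient (MulAction.orbitRel G X)}
    {F₁ F₂ : α → X} (h₁ : ContinuousOn F₁ A) (h₂ : ContinuousOn F₂ A)
    (hK₁ : ∀ p ∈ A, qm G (F₁ p) = K p) (hK₂ : ∀ p ∈ A, qm G (F₂ p) = K p)
    {a₀ : α} (ha₀ : a₀ ∈ A) (h0 : F₁ a₀ = F₂ a₀) : Set.EqOn F₁ F₂ A := by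
  haveI : PreconnectedSpace A := Subtype.preconnectedSpace hA
  set S : Set A := {p : A | F₁ p = F₂ p} with hS
  have loc : ∀ p : A, ∃ V : Set A, IsOpen V ∧ p ∈ V ∧ ∃ c : G, ∀ z ∈ V, F₂ z = c • F₁ z := by
    intro p
    obtain ⟨U, hUo, hUmem, hUdis⟩ := hd (K p).out
    have hP : IsPD (G := G) U := ⟨hUo, hUdis⟩
    have hKp : K (p : α) ∈ qm G '' U := ⟨(K p).out, hUmem, Quotient.out_eq _⟩
    have h1m : F₁ (p : α) ∈ ⋃ g : G, g • U := by
      rw [← preimage_qm_image, Set.mem_preimage, hK₁ p p.2]; exact hKp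
    have h2m : F₂ (p : α) ∈ ⋃ g : G, g • U := by
      rw [← preimage_qm_image, Set.mem_preimage, hK₂ p p.2]; exact hKp
    obtain ⟨g₁, hg₁⟩ := Set.mem_iUnion.1 h1m
    obtain ⟨g₂, hg₂⟩ := Set.mem_iUnion.1 h2m
    refine ⟨(A.restrict F₁) ⁻¹' (g₁ • U) ∩ (A.restrict F₂) ⁻¹' (g₂ • U),
      IsOpen.inter
        (((continuousOn_iff_continuous_restrict).1 h₁).isOpen_preimage _
          (isOpen_smul_set hc hUo g₁))
        (((continuousOn_iff_continuous_restrict).1 h₂).isOpen_preimage _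
          (isOpen_smul_set hc hUo g₂)),
      ⟨hg₁, hg₂⟩, g₂ * g₁⁻¹, ?_⟩
    rintro z ⟨hz₁, hz₂⟩
    have : qm G (F₂ z) = qm G (F₁ z) := by rw [hK₁ z z.2, hK₂ z z.2]
    obtain ⟨h, hh⟩ := qm_eq_iff.1 this
    have hmem : F₂ (z : α) ∈ ((h * g₁) • U) ∩ (g₂ • U) :=
      ⟨hh ▸ smul_mem_smul_set' hz₁ h, hz₂⟩
    have hhg : h * g₁ = g₂ := by
      by_contra hne
      rw [hP.sheets_disjoint hne] at hmem
      exact hmem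
    rw [← hh, ← hhg, mul_assoc, mul_inv_cancel, mul_one]
  have hcl : IsClopen S := by
    constructor
    · rw [← isOpen_compl_iff]
      rw [isOpen_iff_mem_nhds]
      intro p hp
      obtain ⟨V, hVo, hpV, c, hc'⟩ := loc p
      refine Filter.mem_of_superset (hVo.mem_nhds hpV) ?_
      intro z hz hzS
      have h1 : F₂ (z : α) = c • F₁ z := hc' z hz
      have h2 : F₂ (z : α) = F₁ z := hzS.symm
      have hc1 : c = 1 := free hd (by rw [← h1, h2])
      apply hp
      have := hc' p hpV
      rw [hc1, one_smul] at this
      exact this.symm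
    · rw [isOpen_iff_mem_nhds]
      intro p hp
      obtain ⟨V, hVo, hpV, c, hc'⟩ := loc p
      refine Filter.mem_of_superset (hVo.mem_nhds hpV) ?_
      intro z hz
      have hc1 : c = 1 := free hd (by rw [← (hc' p hpV), hp])
      have := hc' z hz
      rw [hc1, one_smul] at this
      exact this.symm
  rcases isClopen_iff.1 hcl with h | h
  · exfalso
    have : (⟨a₀, ha₀⟩ : A) ∈ S := h0
    rw [h] at this
    exact this
  · intro p hp
    have : (⟨p, hp⟩ : A) ∈ S := by rw [h]; trivial
    exact this

/-- Extension of a lift across a set mapped into an evenly covered neighborhood. -/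
lemma lift_extend {α : Type*} [TopologicalSpace α]
    (hc : ∀ g : G, Continuous fun x : X => g • x)
    (hd : ∀ x : X, ∃ U : Set X, IsOpen U ∧ x ∈ U ∧ ∀ g : G, g ≠ 1 → (g • U) ∩ U = ∅)
    {K : α → Quotient (MulAction.orbitRel G X)} (hK : Continuous K)
    {D S : Set α} (hD : IsClosed D) (hS : IsClosed S)
    {U : Set X} (hP : IsPD (G := G) U) (hSU : S ⊆ K ⁻¹' (qm G '' U))
    {F : α → X} (hF : ContinuousOn F D) (hlift : ∀ p ∈ D, qm G (F p) = K p)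
    (hconn : IsPreconnected (D ∩ S)) (hne : (D ∩ S).Nonempty) :
    ∃ F' : α → X, ContinuousOn F' (D ∪ S) ∧ (∀ p ∈ D ∪ S, qm G (F' p) = K p) ∧
      Set.EqOn F' F D := by
  classical
  obtain ⟨p₀, hp₀D, hp₀S⟩ := hne
  have hFp₀ : F p₀ ∈ ⋃ g : G, g • U := by
    rw [← preimage_qm_image, Set.mem_preimage, hlift p₀ hp₀D]
    exact hSU hp₀S
  obtain ⟨g, hg⟩ := Set.mem_iUnion.1 hFp₀
  obtain ⟨s, hscont, hsprop, hssec⟩ := hP.exists_section hc g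
  set F'' : α → X := s ∘ K with hF''
  have hF''cont : ContinuousOn F'' S := hscont.comp hK.continuousOn hSU
  have hF''lift : ∀ p ∈ S, qm G (F'' p) = K p := fun p hp => (hsprop _ (hSU hp)).1
  have hagree : Set.EqOn F F'' (D ∩ S) := by
    apply lift_unique hc hd hconn (hF.mono Set.inter_subset_left)
      (hF''cont.mono Set.inter_subset_right)
      (fun p hp => hlift p hp.1) (fun p hp => hF''lift p hp.2)
      (Set.mem_inter hp₀D hp₀S)
    rw [hF'']
    show F p₀ = s (K p₀)
    have : K p₀ = qm G (F p₀) := (hlift p₀ hp₀D).symm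
    rw [this, hssec _ hg]
  refine ⟨fun p => if p ∈ D then F p else F'' p,
    pasteCO hD hS hF hF''cont hagree, ?_, fun p hp => if_pos hp⟩
  intro p hp
  show qm G (if p ∈ D then F p else F'' p) = K p
  by_cases hpD : p ∈ D
  · rw [if_pos hpD]; exact hlift p hpD
  · rw [if_neg hpD]
    exact hF''lift p (hp.resolve_left hpD)

set_option maxHeartbeats 1600000 in
/-- Lifting of continuous maps on the unit square. -/
lemma lift_rect (hc : ∀ g : G, Continuous fun x : X => g • x)
    (hd : ∀ x : X, ∃ U : Set X, IsOpen U ∧ x ∈ U ∧ ∀ g : G, g ≠ 1 → (g • U) ∩ U = ∅)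
    {K : ℝ × ℝ → Quotient (MulAction.orbitRel G X)} (hK : Continuous K)
    {x₀ : X} (h₀ : qm G x₀ = K (0, 0)) :
    ∃ F : ℝ × ℝ → X, ContinuousOn F (Set.Icc (0:ℝ) 1 ×ˢ Set.Icc (0:ℝ) 1) ∧
      (∀ p ∈ Set.Icc (0:ℝ) 1 ×ˢ Set.Icc (0:ℝ) 1, qm G (F p) = K p) ∧ F (0, 0) = x₀ := by
  classical
  set Q : Set (ℝ × ℝ) := Set.Icc (0:ℝ) 1 ×ˢ Set.Icc (0:ℝ) 1 with hQ
  have hQcomp : IsCompact Q := isCompact_Icc.prod isCompact_Icc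
  -- the open cover by evenly covered sets
  set c : X → Set (ℝ × ℝ) := fun u => K ⁻¹' (qm G '' (hd u).choose) with hcdef
  have hcopen : ∀ u, IsOpen (c u) := fun u =>
    (isOpenMap_qm hc _ (hd u).choose_spec.1).preimage hK
  have hccover : Q ⊆ ⋃ u, c u := by
    intro p _
    refine Set.mem_iUnion.2 ⟨(K p).out, ?_⟩
    exact ⟨(K p).out, (hd (K p).out).choose_spec.2.1, Quotient.out_eq _⟩
  obtain ⟨δ, hδ, hball⟩ := lebesgue_number_lemma_of_metric hQcomp hcopen hccover
  obtain ⟨n', hn'⟩ := exists_nat_one_div_lt hδ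
  set n : ℕ := n' + 1 with hn
  have hnpos : 0 < n := Nat.succ_pos _
  have hnR : (0:ℝ) < n := Nat.cast_pos.2 hnpos
  have hdle : ∀ {a b : ℝ}, a ≤ b → a/(n:ℝ) ≤ b/(n:ℝ) := fun h => (div_le_div_iff_of_pos_right hnR).2 h
  have hdlt : ∀ {a b : ℝ}, a < b → a/(n:ℝ) < b/(n:ℝ) := fun h => (div_lt_div_iff_of_pos_right hnR).2 h
  have hδn : (1:ℝ)/n < δ := by
    rw [hn]; push_cast; exact hn'
  -- the grid squares
  set sq : ℕ → ℕ → Set (ℝ × ℝ) := fun i j =>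
    Set.Icc ((i:ℝ)/n) (((i:ℝ)+1)/n) ×ˢ Set.Icc ((j:ℝ)/n) (((j:ℝ)+1)/n) with hsq
  have hsqclosed : ∀ i j, IsClosed (sq i j) := fun i j =>
    (isClosed_Icc).prod isClosed_Icc
  -- each grid square is contained in an evenly covered set
  have hsqU : ∀ i j, i < n → j < n →
      ∃ U : Set X, IsPD (G := G) U ∧ sq i j ⊆ K ⁻¹' (qm G '' U) := by
    intro i j hi hj
    have hiR : (i:ℝ)/n ∈ Set.Icc (0:ℝ) 1 := by
      constructor
      · positivity
      · rw [div_le_one hnR]; exact_mod_cast hi.le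
    have hjR : (j:ℝ)/n ∈ Set.Icc (0:ℝ) 1 := by
      constructor
      · positivity
      · rw [div_le_one hnR]; exact_mod_cast hj.le
    obtain ⟨u, hu⟩ := hball ((i:ℝ)/n, (j:ℝ)/n) (Set.mk_mem_prod hiR hjR)
    refine ⟨(hd u).choose, ⟨(hd u).choose_spec.1, (hd u).choose_spec.2.2⟩, ?_⟩
    refine Set.Subset.trans ?_ hu
    rintro ⟨a, b⟩ ⟨ha, hb⟩
    rw [Metric.mem_ball, Prod.dist_eq]
    have hb1 : dist a ((i:ℝ)/n) ≤ 1/n := by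
      rw [Real.dist_eq, abs_le]
      simp only [Set.mem_Icc] at ha
      have hr : ((i:ℝ)+1)/n = (i:ℝ)/n + 1/n := by ring
      constructor <;> [linarith [ha.1, hδ.le]; linarith [ha.2, hr ▸ ha.2]]
    have hb2 : dist b ((j:ℝ)/n) ≤ 1/n := by
      rw [Real.dist_eq, abs_le]
      simp only [Set.mem_Icc] at hb
      have hr : ((j:ℝ)+1)/n = (j:ℝ)/n + 1/n := by ring
      constructor <;> [linarith [hb.1, hδ.le]; linarith [hb.2, hr ▸ hb.2]]
    calc dist a ((i:ℝ)/n) ⊔ dist b ((j:ℝ)/n) ≤ 1/n := sup_le hb1 hb2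
    _ < δ := hδn
  -- the partial regions
  set Dm : ℕ → Set (ℝ × ℝ) := fun m =>
    {((0:ℝ), (0:ℝ))} ∪ ⋃ m' ∈ Finset.range m, sq (m' % n) (m' / n) with hDm
  have hDmclosed : ∀ m, IsClosed (Dm m) := by
    intro m
    refine isClosed_singleton.union ?_
    exact (Finset.range m).finite_toSet.isClosed_biUnion fun i _ => hsqclosed _ _
  have hDmsucc : ∀ m, Dm (m + 1) = Dm m ∪ sq (m % n) (m / n) := by
    intro m
    rw [hDm]
    simp only [Finset.range_add_one, Finset.set_biUnion_insert]
    rw [Set.union_comm (sq (m % n) (m / n)) _, ← Set.union_assoc]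
  have hDmmono : ∀ m m', m ≤ m' → Dm m ⊆ Dm m' := by
    intro m m' hmm
    rw [hDm]
    apply Set.union_subset_union_right
    intro p hp
    simp only [Set.mem_iUnion] at hp ⊢
    obtain ⟨z, hz, hzp⟩ := hp
    exact ⟨z, by simp only [Finset.mem_range] at hz ⊢; omega, hzp⟩
  have horig : ((0:ℝ), (0:ℝ)) ∈ Dm 0 := Set.mem_union_left _ rfl
  -- main induction
  have main : ∀ m, m ≤ n * n → ∃ F : ℝ × ℝ → X, ContinuousOn F (Dm m) ∧
      (∀ p ∈ Dm m, qm G (F p) = K p) ∧ F (0, 0) = x₀ := by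
    intro m
    induction m with
    | zero =>
      intro _
      refine ⟨fun _ => x₀, continuousOn_const, ?_, rfl⟩
      rintro p hp
      have hD0 : Dm 0 = {((0:ℝ), (0:ℝ))} := by
        rw [hDm]; simp
      rw [hD0] at hp
      rw [Set.mem_singleton_iff.1 hp]
      exact h₀
    | succ m ih =>
      intro hm
      obtain ⟨F, hFcont, hFlift, hF0⟩ := ih (by omega)
      set i : ℕ := m % n with hi
      set j : ℕ := m / n with hj
      have him : i < n := Nat.mod_lt _ hnpos
      have hjm : j < n := by
        rw [hj]
        exact Nat.div_lt_of_lt_mul (by omega)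
      have hmdecomp : i + j * n = m := Nat.mod_add_div' m n
      obtain ⟨U, hPU, hsubU⟩ := hsqU i j him hjm
      -- connectivity of the overlap
      have hconn : IsPreconnected (Dm m ∩ sq i j) ∧ (Dm m ∩ sq i j).Nonempty := by
        by_cases hm0 : m = 0
        · -- the first square: overlap is the origin
          have hi0 : i = 0 := by rw [hi, hm0]; simp
          have hj0 : j = 0 := by rw [hj, hm0]; simp
          have h00 : ((0:ℝ), (0:ℝ)) ∈ sq i j := by
            rw [hsq, hi0, hj0]
            constructor <;>
              exact ⟨by norm_num, by positivity⟩
          have hD0 : Dm m = {((0:ℝ), (0:ℝ))} := by rw [hDm, hm0]; simp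
          have heq : Dm m ∩ sq i j = {((0:ℝ), (0:ℝ))} := by
            rw [hD0]
            exact Set.inter_eq_left.2 (Set.singleton_subset_iff.2 h00)
          rw [heq]
          exact ⟨isPreconnected_singleton, Set.singleton_nonempty _⟩
        · -- later squares: overlap is left edge and/or bottom edge
          set L : Set (ℝ × ℝ) := {((i:ℝ)/n)} ×ˢ Set.Icc ((j:ℝ)/n) (((j:ℝ)+1)/n) with hL
          set B : Set (ℝ × ℝ) := Set.Icc ((i:ℝ)/n) (((i:ℝ)+1)/n) ×ˢ {((j:ℝ)/n)} with hB
          have hLpre : IsPreconnected L :=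
            ((convex_singleton _).prod (convex_Icc _ _)).isPreconnected
          have hBpre : IsPreconnected B :=
            ((convex_Icc _ _).prod (convex_singleton _)).isPreconnected
          have hcornL : ((i:ℝ)/n, (j:ℝ)/n) ∈ L :=
            Set.mk_mem_prod rfl ⟨le_rfl, hdle (by linarith)⟩
          have hcornB : ((i:ℝ)/n, (j:ℝ)/n) ∈ B :=
            Set.mk_mem_prod ⟨le_rfl, hdle (by linarith)⟩ rfl
          have hLsub : 1 ≤ i → L ⊆ Dm m ∩ sq i j := by
            intro hi1
            rintro ⟨a, b⟩ ⟨ha, hb⟩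
            simp only [Set.mem_singleton_iff] at ha
            have hc1 : ((i - 1 : ℕ):ℝ) = (i:ℝ) - 1 := by
              push_cast [Nat.cast_sub hi1]; ring
            constructor
            · apply Set.mem_union_right
              refine Set.mem_biUnion (show m - 1 ∈ Finset.range m by
                simp only [Finset.mem_range]; omega) ?_
              have hdec : m - 1 = (i - 1) + j * n := by omega
              have e1 : (m - 1) % n = i - 1 := by
                rw [hdec, Nat.add_mul_mod_self_right, Nat.mod_eq_of_lt (by omega)]
              have e2 : (m - 1) / n = j := by
                rw [hdec, Nat.add_mul_div_right _ _ hnpos, Nat.div_eq_of_lt (by omega),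
                  Nat.zero_add]
              rw [e1, e2, hsq]
              refine Set.mk_mem_prod ⟨?_, ?_⟩ hb
              · rw [ha, hc1]
                exact hdle (by linarith)
              · rw [ha, hc1]
                have heq1 : (((i:ℝ) - 1) + 1) = (i:ℝ) := by ring
                rw [heq1]
            · rw [hsq]
              refine Set.mk_mem_prod ⟨?_, ?_⟩ hb
              · rw [ha]
              · rw [ha]
                exact hdle (by linarith)
          have hBsub : 1 ≤ j → B ⊆ Dm m ∩ sq i j := by
            intro hj1
            rintro ⟨a, b⟩ ⟨ha, hb⟩
            simp only [Set.mem_singleton_iff] at hb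
            have hc1 : ((j - 1 : ℕ):ℝ) = (j:ℝ) - 1 := by
              push_cast [Nat.cast_sub hj1]; ring
            have hjj : (j - 1) + 1 = j := Nat.succ_pred_eq_of_pos hj1
            have hmn : m = i + ((j - 1) + 1) * n := by rw [hjj]; omega
            have hmn' : m - n = i + (j - 1) * n := by
              rw [add_one_mul] at hmn; omega
            have hnm : n ≤ m := by
              have h1 : n ≤ j * n := Nat.le_mul_of_pos_left n hj1
              omega
            constructor
            · apply Set.mem_union_right
              refine Set.mem_biUnion (show m - n ∈ Finset.range m by
                simp only [Finset.mem_range]; omega) ?_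
              have e1 : (m - n) % n = i := by
                rw [hmn', Nat.add_mul_mod_self_right, Nat.mod_eq_of_lt him]
              have e2 : (m - n) / n = j - 1 := by
                rw [hmn', Nat.add_mul_div_right _ _ hnpos, Nat.div_eq_of_lt him,
                  Nat.zero_add]
              rw [e1, e2, hsq]
              refine Set.mk_mem_prod ha ⟨?_, ?_⟩
              · rw [hb, hc1]
                exact hdle (by linarith)
              · rw [hb, hc1]
                have heq1 : (((j:ℝ) - 1) + 1) = (j:ℝ) := by ring
                rw [heq1]
            · rw [hsq]
              refine Set.mk_mem_prod ha ⟨?_, ?_⟩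
              · rw [hb]
              · rw [hb]
                exact hdle (by linarith)
          have hupper : ∀ p ∈ Dm m ∩ sq i j, (1 ≤ i ∧ p ∈ L) ∨ (1 ≤ j ∧ p ∈ B) := by
            rintro p ⟨hpD, hpS⟩
            rcases hpD with hp0 | hpU
            · exfalso
              rw [Set.mem_singleton_iff] at hp0
              rw [hp0, hsq] at hpS
              obtain ⟨⟨h1, _⟩, ⟨h2, _⟩⟩ := hpS
              have hi0 : i = 0 := by
                by_contra h
                have hx : (1:ℝ) ≤ (i:ℝ) := by
                  exact_mod_cast Nat.one_le_iff_ne_zero.2 h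
                have : (0:ℝ) < (i:ℝ)/n := by positivity
                simp only at h1
                linarith
              have hj0 : j = 0 := by
                by_contra h
                have hx : (1:ℝ) ≤ (j:ℝ) := by
                  exact_mod_cast Nat.one_le_iff_ne_zero.2 h
                have : (0:ℝ) < (j:ℝ)/n := by positivity
                simp only at h2
                linarith
              exact hm0 (by rw [← hmdecomp, hi0, hj0]; simp)
            · simp only [Set.mem_iUnion] at hpU
              obtain ⟨m', hm', hpm'⟩ := hpU
              rw [Finset.mem_range] at hm'
              have hi' : m' % n < n := Nat.mod_lt _ hnpos
              have hm'dec : m' % n + m' / n * n = m' := Nat.mod_add_div' m' n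
              have hlt : m' % n + (m' / n) * n < i + j * n := by
                rw [hm'dec, hmdecomp]; exact hm'
              rcases grid_lt him hlt with hj' | ⟨hjeq, hilt⟩
              · by_cases hj'' : m' / n + 1 = j
                · right
                  refine ⟨Nat.lt_of_le_of_lt (Nat.zero_le _) hj', ?_⟩
                  rw [hsq] at hpm' hpS
                  have hcast : ((m' / n : ℕ):ℝ) + 1 = (j:ℝ) := by
                    exact_mod_cast congrArg (Nat.cast : ℕ → ℝ) hj''
                  have hup : p.2 ≤ (j:ℝ)/n := by
                    have := hpm'.2.2
                    rwa [hcast] at this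
                  have hlo : (j:ℝ)/n ≤ p.2 := hpS.2.1
                  exact Set.mk_mem_prod hpS.1 (le_antisymm hup hlo)
                · exfalso
                  rw [hsq] at hpm' hpS
                  have h1 := hpm'.2.2
                  have h2 : (j:ℝ)/n ≤ p.2 := hpS.2.1
                  have hcnat : m' / n + 1 < j :=
                    Nat.lt_of_le_of_ne (Nat.succ_le_of_lt hj') hj''
                  have hc : ((m' / n : ℕ):ℝ) + 1 < (j:ℝ) := by exact_mod_cast hcnat
                  have hstr := hdlt hc
                  linarith
              · by_cases hi'' : m' % n + 1 = i
                · left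
                  refine ⟨Nat.lt_of_le_of_lt (Nat.zero_le _) hilt, ?_⟩
                  rw [hsq] at hpm' hpS
                  have hcast : ((m' % n : ℕ):ℝ) + 1 = (i:ℝ) := by
                    exact_mod_cast congrArg (Nat.cast : ℕ → ℝ) hi''
                  have hup : p.1 ≤ (i:ℝ)/n := by
                    have := hpm'.1.2
                    rwa [hcast] at this
                  have hlo : (i:ℝ)/n ≤ p.1 := hpS.1.1
                  exact Set.mk_mem_prod (le_antisymm hup hlo) hpS.2
                · exfalso
                  rw [hsq] at hpm' hpS
                  have h1 := hpm'.1.2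
                  have h2 : (i:ℝ)/n ≤ p.1 := hpS.1.1
                  have hcnat : m' % n + 1 < i :=
                    Nat.lt_of_le_of_ne (Nat.succ_le_of_lt hilt) hi''
                  have hc : ((m' % n : ℕ):ℝ) + 1 < (i:ℝ) := by exact_mod_cast hcnat
                  have hstr := hdlt hc
                  linarith
          by_cases hi1 : 1 ≤ i
          · by_cases hj1 : 1 ≤ j
            · have heq : Dm m ∩ sq i j = L ∪ B := by
                apply subset_antisymm
                · intro p hp
                  rcases hupper p hp with ⟨_, h⟩ | ⟨_, h⟩
                  exacts [Or.inl h, Or.inr h]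
                · exact Set.union_subset (hLsub hi1) (hBsub hj1)
              rw [heq]
              exact ⟨IsPreconnected.union _ hcornL hcornB hLpre hBpre,
                ⟨_, Or.inl hcornL⟩⟩
            · have heq : Dm m ∩ sq i j = L := by
                apply subset_antisymm
                · intro p hp
                  rcases hupper p hp with ⟨_, h⟩ | ⟨h, _⟩
                  · exact h
                  · omega
                · exact hLsub hi1
              rw [heq]
              exact ⟨hLpre, ⟨_, hcornL⟩⟩
          · have hj1 : 1 ≤ j := by
              by_contra hj0
              have hi0 : i = 0 := Nat.eq_zero_of_not_pos hi1
              have hj0' : j = 0 := Nat.eq_zero_of_not_pos hj0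
              exact hm0 (by rw [← hmdecomp, hi0, hj0']; simp)
            have heq : Dm m ∩ sq i j = B := by
              apply subset_antisymm
              · intro p hp
                rcases hupper p hp with ⟨h, _⟩ | ⟨_, h⟩
                · omega
                · exact h
              · exact hBsub hj1
            rw [heq]
            exact ⟨hBpre, ⟨_, hcornB⟩⟩
      obtain ⟨F', hF'cont, hF'lift, hF'eq⟩ :=
        lift_extend hc hd hK (hDmclosed m) (hsqclosed i j) hPU hsubU hFcont hFlift
          hconn.1 hconn.2
      refine ⟨F', ?_, ?_, ?_⟩
      · rw [hDmsucc m]; exact hF'cont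
      · rw [hDmsucc m]; exact hF'lift
      · rw [hF'eq (hDmmono 0 m (by omega) horig)]; exact hF0
  obtain ⟨F, hFcont, hFlift, hF0⟩ := main (n * n) le_rfl
  have hQsub : Q ⊆ Dm (n * n) := by
    rintro ⟨a, b⟩ ⟨ha, hb⟩
    obtain ⟨i, hi, hia, hia'⟩ := grid_cover hnpos ha
    obtain ⟨j, hj, hjb, hjb'⟩ := grid_cover hnpos hb
    refine Set.mem_union_right _ ?_
    refine Set.mem_biUnion (show i + j * n ∈ Finset.range (n*n) by
      simp only [Finset.mem_range]
      calc i + j * n < n + j * n := by omega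
      _ = (j + 1) * n := by ring
      _ ≤ n * n := Nat.mul_le_mul_right n (by omega)) ?_
    have h1 : (i + j * n) % n = i := by
      rw [Nat.add_mul_mod_self_right, Nat.mod_eq_of_lt hi]
    have h2 : (i + j * n) / n = j := by
      rw [Nat.add_mul_div_right _ _ hnpos, Nat.div_eq_of_lt hi, Nat.zero_add]
    rw [h1, h2]
    exact ⟨⟨hia, hia'⟩, ⟨hjb, hjb'⟩⟩
  exact ⟨F, hFcont.mono hQsub, fun p hp => hFlift p (hQsub hp), hF0⟩

lemma projIcc_zero : Set.projIcc (0:ℝ) 1 zero_le_one 0 = 0 := by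
  simp only [Set.projIcc_left, Set.Icc.mk_zero]

lemma projIcc_one : Set.projIcc (0:ℝ) 1 zero_le_one 1 = 1 := by
  simp only [Set.projIcc_right, Set.Icc.mk_one]

lemma projIcc_coe (t : unitInterval) : Set.projIcc (0:ℝ) 1 zero_le_one (t : ℝ) = t := by
  rw [Set.projIcc_of_mem _ t.2]

/-- Path lifting. -/
lemma lift_path (hc : ∀ g : G, Continuous fun x : X => g • x)
    (hd : ∀ x : X, ∃ U : Set X, IsOpen U ∧ x ∈ U ∧ ∀ g : G, g ≠ 1 → (g • U) ∩ U = ∅)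
    (γ : C(unitInterval, Quotient (MulAction.orbitRel G X))) (x₀ : X)
    (h₀ : qm G x₀ = γ 0) :
    ∃ Γ : C(unitInterval, X), (∀ t, qm G (Γ t) = γ t) ∧ Γ 0 = x₀ := by
  set K : ℝ × ℝ → Quotient (MulAction.orbitRel G X) :=
    fun p => γ (Set.projIcc (0:ℝ) 1 zero_le_one p.1) with hK
  have hKc : Continuous K :=
    γ.continuous.comp (continuous_projIcc.comp continuous_fst)
  have h₀' : qm G x₀ = K (0, 0) := by
    rw [hK]; simp only; rw [projIcc_zero]; exact h₀
  obtain ⟨F, hFc, hFl, hF0⟩ := lift_rect hc hd hKc h₀'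
  have hmem : ∀ t : unitInterval, ((t : ℝ), (0:ℝ)) ∈ Set.Icc (0:ℝ) 1 ×ˢ Set.Icc (0:ℝ) 1 :=
    fun t => ⟨t.2, by norm_num⟩
  refine ⟨⟨fun t => F ((t : ℝ), 0), ?_⟩, ?_, ?_⟩
  · exact hFc.comp_continuous (by continuity) hmem
  · intro t
    show qm G (F ((t : ℝ), 0)) = γ t
    rw [hFl _ (hmem t), hK]
    simp only
    rw [projIcc_coe]
  · show F ((((0:unitInterval)) : ℝ), 0) = x₀
    rw [show (((0:unitInterval)):ℝ) = (0:ℝ) by simp]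
    exact hF0

/-- Key deduction from a null-homotopy: endpoints of the lifted path agree. -/
lemma endpoint_eq_of_nullhomotopic (hc : ∀ g : G, Continuous fun x : X => g • x)
    (hd : ∀ x : X, ∃ U : Set X, IsOpen U ∧ x ∈ U ∧ ∀ g : G, g ≠ 1 → (g • U) ∩ U = ∅)
    {α : C(unitInterval, X)}
    {H : C(unitInterval × unitInterval, Quotient (MulAction.orbitRel G X))}
    (hH0 : ∀ t, H (0, t) = qm G (α t))
    (hHs0 : ∀ s, H (s, 0) = H (0, 0))
    (hHs1 : ∀ s, H (s, 1) = H (0, 1))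
    (hH1 : ∀ t, H (1, t) = H (1, 0)) :
    α 1 = α 0 := by
  set pr : ℝ → unitInterval := Set.projIcc (0:ℝ) 1 zero_le_one with hpr
  set K : ℝ × ℝ → Quotient (MulAction.orbitRel G X) :=
    fun p => H (pr p.1, pr p.2) with hK
  have hKc : Continuous K := H.continuous.comp
    ((continuous_projIcc.comp continuous_fst).prodMk
      (continuous_projIcc.comp continuous_snd))
  have h₀' : qm G (α 0) = K (0, 0) := by
    rw [hK]; simp only [hpr]; rw [projIcc_zero, hH0 0]
  obtain ⟨F, hFc, hFl, hF0⟩ := lift_rect hc hd hKc h₀'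
  have h01 : (0:ℝ) ∈ Set.Icc (0:ℝ) 1 := by norm_num
  have h11 : (1:ℝ) ∈ Set.Icc (0:ℝ) 1 := by norm_num
  have hprc : Continuous pr := continuous_projIcc
  -- left edge : F (0, t) = α (pr t)
  have cleft : Set.EqOn F (fun p : ℝ × ℝ => α (pr p.2)) ({(0:ℝ)} ×ˢ Set.Icc (0:ℝ) 1) := by
    refine lift_unique hc hd (K := K) (a₀ := ((0:ℝ), (0:ℝ)))
      (((convex_singleton ((0:ℝ))).prod (convex_Icc (0:ℝ) 1)).isPreconnected)
      (hFc.mono ?_) ((α.continuous.comp (hprc.comp continuous_snd)).continuousOn)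
      (fun p hp => hFl p ?_) (fun p hp => ?_) (Set.mk_mem_prod rfl h01) ?_
    · rintro ⟨a, b⟩ ⟨ha, hb⟩
      rw [Set.mem_singleton_iff] at ha
      exact ⟨ha ▸ h01, hb⟩
    · obtain ⟨ha, hb⟩ := hp
      rw [Set.mem_singleton_iff] at ha
      exact ⟨ha ▸ h01, hb⟩
    · obtain ⟨ha, hb⟩ := hp
      rw [Set.mem_singleton_iff] at ha
      show qm G (α (pr p.2)) = K p
      rw [hK]
      simp only
      rw [show pr p.1 = 0 by rw [ha, hpr]; exact projIcc_zero]
      exact (hH0 (pr p.2)).symm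
    · show F (0, 0) = α (pr 0)
      rw [show pr (0:ℝ) = 0 from projIcc_zero, hF0]
  -- bottom edge : F (s, 0) = α 0
  have cbot : Set.EqOn F (fun _ : ℝ × ℝ => α 0) (Set.Icc (0:ℝ) 1 ×ˢ {(0:ℝ)}) := by
    refine lift_unique hc hd (K := K) (a₀ := ((0:ℝ), (0:ℝ)))
      (((convex_Icc (0:ℝ) 1).prod (convex_singleton ((0:ℝ)))).isPreconnected)
      (hFc.mono ?_) continuousOn_const
      (fun p hp => hFl p ?_) (fun p hp => ?_) (Set.mk_mem_prod h01 rfl) hF0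
    · rintro ⟨a, b⟩ ⟨ha, hb⟩
      rw [Set.mem_singleton_iff] at hb
      exact ⟨ha, hb ▸ h01⟩
    · obtain ⟨ha, hb⟩ := hp
      rw [Set.mem_singleton_iff] at hb
      exact ⟨ha, hb ▸ h01⟩
    · obtain ⟨ha, hb⟩ := hp
      rw [Set.mem_singleton_iff] at hb
      show qm G (α 0) = K p
      rw [hK]
      simp only
      rw [show pr p.2 = 0 by rw [hb, hpr]; exact projIcc_zero, hHs0 (pr p.1), hH0 0]
  -- top edge : F (s, 1) = F (0, 1)
  have ctop : Set.EqOn F (fun _ : ℝ × ℝ => F (0, 1)) (Set.Icc (0:ℝ) 1 ×ˢ {(1:ℝ)}) := by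
    refine lift_unique hc hd (K := K) (a₀ := ((0:ℝ), (1:ℝ)))
      (((convex_Icc (0:ℝ) 1).prod (convex_singleton ((1:ℝ)))).isPreconnected)
      (hFc.mono ?_) continuousOn_const
      (fun p hp => hFl p ?_) (fun p hp => ?_) (Set.mk_mem_prod h01 rfl) rfl
    · rintro ⟨a, b⟩ ⟨ha, hb⟩
      rw [Set.mem_singleton_iff] at hb
      exact ⟨ha, hb ▸ h11⟩
    · obtain ⟨ha, hb⟩ := hp
      rw [Set.mem_singleton_iff] at hb
      exact ⟨ha, hb ▸ h11⟩
    · obtain ⟨ha, hb⟩ := hp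
      rw [Set.mem_singleton_iff] at hb
      show qm G (F (0, 1)) = K p
      rw [hFl (0, 1) ⟨h01, h11⟩, hK]
      simp only
      rw [show pr p.2 = 1 by rw [hb, hpr]; exact projIcc_one]
      rw [show pr (0:ℝ) = 0 from projIcc_zero, show pr (1:ℝ) = 1 from projIcc_one]
      exact (hHs1 (pr p.1)).symm
  -- right edge : F (1, t) = F (1, 0)
  have cright : Set.EqOn F (fun _ : ℝ × ℝ => F (1, 0)) ({(1:ℝ)} ×ˢ Set.Icc (0:ℝ) 1) := by
    refine lift_unique hc hd (K := K) (a₀ := ((1:ℝ), (0:ℝ)))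
      (((convex_singleton ((1:ℝ))).prod (convex_Icc (0:ℝ) 1)).isPreconnected)
      (hFc.mono ?_) continuousOn_const
      (fun p hp => hFl p ?_) (fun p hp => ?_) (Set.mk_mem_prod rfl h01) rfl
    · rintro ⟨a, b⟩ ⟨ha, hb⟩
      rw [Set.mem_singleton_iff] at ha
      exact ⟨ha ▸ h11, hb⟩
    · obtain ⟨ha, hb⟩ := hp
      rw [Set.mem_singleton_iff] at ha
      exact ⟨ha ▸ h11, hb⟩
    · obtain ⟨ha, hb⟩ := hp
      rw [Set.mem_singleton_iff] at ha
      show qm G (F (1, 0)) = K p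
      rw [hFl (1, 0) ⟨h11, h01⟩, hK]
      simp only
      rw [show pr p.1 = 1 by rw [ha, hpr]; exact projIcc_one]
      rw [show pr (1:ℝ) = 1 from projIcc_one, show pr (0:ℝ) = 0 from projIcc_zero]
      exact (hH1 (pr p.2)).symm
  have e1 : F (0, 1) = α 1 := by
    have h := cleft (Set.mk_mem_prod rfl h11)
    rw [h]
    simp only
    rw [show pr (1:ℝ) = 1 from projIcc_one]
  have e2 : F (1, 0) = α 0 := cbot (Set.mk_mem_prod h11 rfl)
  have e3 : F (1, 1) = F (0, 1) := ctop (Set.mk_mem_prod h11 rfl)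
  have e4 : F (1, 1) = F (1, 0) := cright (Set.mk_mem_prod rfl h11)
  rw [← e1, ← e3, e4, e2]

section Monodromy

open CategoryTheory

attribute [local instance] Path.Homotopic.setoid

/-- Project a path in `X` to a path in the orbit space. -/
def projP {a b : X} (α : Path a b) {y₀ y₁ : Quotient (MulAction.orbitRel G X)}
    (h₀ : qm G a = y₀) (h₁ : qm G b = y₁) : Path y₀ y₁ where
  toFun := fun t => qm G (α t)
  continuous_toFun := continuous_qm.comp α.continuous
  source' := by show qm G (α 0) = y₀; rw [α.source]; exact h₀
  target' := by show qm G (α 1) = y₁; rw [α.target]; exact h₁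

variable [SimplyConnectedSpace X]

lemma projP_quot_eq {a b a' b' : X} (α : Path a b) (β : Path a' b')
    (haa : a' = a) (hbb : b' = b) {y₀ y₁ : Quotient (MulAction.orbitRel G X)}
    (h₀ : qm G a = y₀) (h₁ : qm G b = y₁) (h₀' : qm G a' = y₀) (h₁' : qm G b' = y₁) :
    (⟦projP α h₀ h₁⟧ : Path.Homotopic.Quotient y₀ y₁) = ⟦projP β h₀' h₁'⟧ := by
  subst haa hbb h₀ h₁
  apply Quotient.sound
  have e1 : projP α rfl rfl = α.map (continuous_qm (G := G)) := Path.ext rfl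
  have e2 : projP β h₀' h₁' = β.map (continuous_qm (G := G)) := Path.ext rfl
  rw [e1, e2]
  exact Path.Homotopic.map (SimplyConnectedSpace.paths_homotopic α β)
    ⟨qm G, continuous_qm⟩

lemma projP_trans {a b c : X} (α : Path a b) (β : Path b c)
    {y₀ y₁ y₂ : Quotient (MulAction.orbitRel G X)}
    (h₀ : qm G a = y₀) (h₁ : qm G b = y₁) (h₂ : qm G c = y₂) :
    projP (α.trans β) h₀ h₂ = (projP α h₀ h₁).trans (projP β h₁ h₂) := by
  apply Path.ext
  funext t
  show qm G ((α.trans β) t) = ((projP α h₀ h₁).trans (projP β h₁ h₂)) t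
  rw [Path.trans_apply, Path.trans_apply]
  split_ifs <;> rfl

lemma projP_smul (hc : ∀ g : G, Continuous fun x : X => g • x) (g : G) {a b : X}
    (α : Path a b) {y₀ y₁ : Quotient (MulAction.orbitRel G X)}
    (h₀ : qm G (g • a) = y₀) (h₁ : qm G (g • b) = y₁)
    (h₀' : qm G a = y₀) (h₁' : qm G b = y₁) :
    projP (α.map (hc g) : Path (g • a) (g • b)) h₀ h₁ = projP α h₀' h₁' := by
  apply Path.ext
  funext t
  show qm G (g • α t) = qm G (α t)
  exact qm_smul g (α t)

variable [PathConnectedSpace X]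

/-- The class of the projected loop corresponding to a group element. -/
noncomputable def loopClass (x : X) (g : G) :
    Path.Homotopic.Quotient (qm G x) (qm G x) :=
  ⟦projP (PathConnectedSpace.somePath x (g • x)) rfl (qm_smul g x)⟧

lemma loopClass_mul (hc : ∀ g : G, Continuous fun x : X => g • x) (x : X) (g h : G) :
    loopClass x (g * h) =
      Path.Homotopic.Quotient.trans (loopClass x g) (loopClass x h) := by
  set pg := PathConnectedSpace.somePath x (g • x) with hpg
  set ph := PathConnectedSpace.somePath x (h • x) with hph
  set R : Path x (g • h • x) := pg.trans (ph.map (hc g)) with hR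
  have e2 : qm G (g • h • x) = qm G x := by rw [qm_smul, qm_smul]
  have step1 : loopClass x (g * h) = ⟦projP R rfl e2⟧ := by
    rw [loopClass]
    exact projP_quot_eq _ R rfl (by rw [mul_smul]) _ _ rfl e2
  rw [step1, hR, projP_trans pg (ph.map (hc g)) rfl (qm_smul g x) e2]
  change Path.Homotopic.Quotient.trans (Path.Homotopic.Quotient.mk _)
    (Path.Homotopic.Quotient.mk _) = _
  congr 1
  rw [projP_smul hc g ph (qm_smul g x) e2 rfl (qm_smul h x)]
  rfl

/-- an element of the fundamental group from a loop class -/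
noncomputable def autOf {y : Quotient (MulAction.orbitRel G X)} (p : Path.Homotopic.Quotient y y) :
    FundamentalGroup (Quotient (MulAction.orbitRel G X)) y :=
  FundamentalGroup.fromPath p

@[simp] lemma autOf_hom {y : Quotient (MulAction.orbitRel G X)}
    (p : Path.Homotopic.Quotient y y) : FundamentalGroup.toPath (autOf p) = p := rfl

lemma aut_hom_mul {y : Quotient (MulAction.orbitRel G X)}
    (a b : FundamentalGroup (Quotient (MulAction.orbitRel G X)) y) :
    FundamentalGroup.toPath (a * b) =
      Path.Homotopic.Quotient.trans (FundamentalGroup.toPath b) (FundamentalGroup.toPath a) := rfl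

/-- The monodromy homomorphism. -/
noncomputable def Psi (hc : ∀ g : G, Continuous fun x : X => g • x) (x : X) :
    G →* FundamentalGroup (Quotient (MulAction.orbitRel G X)) (qm G x) :=
  MonoidHom.mk' (fun g => autOf (loopClass x g⁻¹)) (by
    intro a b
    show FundamentalGroup.toPath _ = FundamentalGroup.toPath (_ * _)
    rw [aut_hom_mul, autOf_hom, autOf_hom, autOf_hom, mul_inv_rev,
      loopClass_mul hc x b⁻¹ a⁻¹])

end Monodromy

end OrbitCover

section MainTheorem

open CategoryTheory OrbitCover

attribute [local instance] Path.Homotopic.setoid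

/-- If a group `G` acts by homeomorphisms on a path-connected, simply
connected, locally path-connected space `X`, and the action is properly discontinuous
(every point has an open neighborhood `U` with `g • U ∩ U = ∅` for all `g ≠ 1`), then the
fundamental group of the orbit space `X/G` is isomorphic to `G`. -/
theorem fundamentalGroup_of_properlyDiscontinuous_quotient
    (X : Type*) [TopologicalSpace X] [PathConnectedSpace X] [SimplyConnectedSpace X]
    [LocallyPathConnectedSpace X]
    (G : Type*) [Group G] [MulAction G X]
    (hcont : ∀ g : G, Continuous fun x : X => g • x)
    (hdisc : ∀ x : X, ∃ U : Set X, IsOpen U ∧ x ∈ U ∧ ∀ g : G, g ≠ 1 → (g • U) ∩ U = ∅)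
    (x : X) :
    Nonempty (FundamentalGroup (Quotient (MulAction.orbitRel G X))
      (Quotient.mk (MulAction.orbitRel G X) x) ≃* G) := by
  haveI : Nonempty X := ⟨x⟩
  classical
  set Ψ := OrbitCover.Psi (X := X) (G := G) hcont x with hΨ
  have hinj : Function.Injective Ψ := by
    rw [injective_iff_map_eq_one]
    intro g hg
    have hhom : OrbitCover.loopClass x g⁻¹ =
        (⟦Path.refl (qm G x)⟧ : Path.Homotopic.Quotient (qm G x) (qm G x)) := by
      have h1 := hg
      exact h1
    set α := PathConnectedSpace.somePath x (g⁻¹ • x) with hα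
    have hhomotopic : (OrbitCover.projP α rfl (qm_smul g⁻¹ x)).Homotopic
        (Path.refl (qm G x)) := Quotient.exact hhom
    obtain ⟨Hh⟩ := hhomotopic
    have mem0 : (0 : unitInterval) ∈ ({0, 1} : Set unitInterval) := Set.mem_insert _ _
    have mem1 : (1 : unitInterval) ∈ ({0, 1} : Set unitInterval) :=
      Set.mem_insert_of_mem _ rfl
    have hend : α.toContinuousMap 1 = α.toContinuousMap 0 := by
      apply OrbitCover.endpoint_eq_of_nullhomotopic hcont hdisc
        (H := Hh.toHomotopy.toContinuousMap)
      · intro t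
        exact Hh.toHomotopy.apply_zero t
      · intro s
        exact (Hh.eq_fst s mem0).trans (Hh.eq_fst 0 mem0).symm
      · intro s
        exact (Hh.eq_fst s mem1).trans (Hh.eq_fst 0 mem1).symm
      · intro t
        exact (Hh.toHomotopy.apply_one t).trans (Hh.toHomotopy.apply_one 0).symm
    have hxx : g⁻¹ • x = x := by
      have h1 : α 1 = α 0 := hend
      rw [α.source, α.target] at h1
      exact h1
    have : g⁻¹ = 1 := OrbitCover.free hdisc hxx
    rwa [inv_eq_one] at this
  have hsurj : Function.Surjective Ψ := by
    intro a
    obtain ⟨γ, hγ⟩ := Quotient.exists_rep (FundamentalGroup.toPath a)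
    obtain ⟨Γ, hql, hΓ0⟩ := OrbitCover.lift_path hcont hdisc γ.toContinuousMap x
      (show qm G x = γ 0 from γ.source.symm)
    have h1 : qm G (Γ 1) = qm G x := by
      rw [hql 1]
      exact γ.target
    obtain ⟨g, hg⟩ := OrbitCover.qm_eq_iff.1 h1
    refine ⟨g⁻¹, ?_⟩
    show OrbitCover.loopClass x g⁻¹⁻¹ = FundamentalGroup.toPath a
    rw [inv_inv, ← hγ]
    set α : Path x (g • x) :=
      { toContinuousMap := Γ, source' := hΓ0, target' := hg.symm } with hαdef
    rw [OrbitCover.loopClass]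
    have e1 : (⟦OrbitCover.projP (PathConnectedSpace.somePath x (g • x)) rfl
          (qm_smul g x)⟧ : Path.Homotopic.Quotient (qm G x) (qm G x)) =
        ⟦OrbitCover.projP α rfl (qm_smul g x)⟧ :=
      OrbitCover.projP_quot_eq _ _ rfl rfl _ _ _ _
    rw [e1]
    have e2 : OrbitCover.projP α rfl (qm_smul g x) = γ := by
      apply Path.ext
      funext t
      exact hql t
    rw [e2]
  exact ⟨(MulEquiv.ofBijective Ψ ⟨hinj, hsurj⟩).symm⟩

end MainTheorem
end

section
/- Let P be a partial order on which a group G acts by order isomorphisms (g • · is monotone with monotone inverse for each g), and let d : P → ℕ satisfy d(p) < d(q) whenever p < q. Suppose g ∈ G is such that g • p ≠ p for all p ∈ P and d(g • p) = d(p) for all p ∈ P. Then for every nonempty chain σ ⊆ P there is no chain α ⊆ P containing both σ and g • σ = {g • p : p ∈ σ} as subsets. -/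
open Pointwise

/-- Let a group `G` act on a partial order `P` by order isomorphisms, and
let `d : P → ℕ` be strictly monotone. If `g ∈ G` has no fixed point on `P` and preserves
`d`, then for every nonempty chain `σ ⊆ P` there is no chain `α` containing both `σ` and
`g • σ`. -/
theorem no_chain_containing_chain_and_translate
    (P : Type*) [PartialOrder P] (G : Type*) [Group G] [MulAction G P]
    (hmono : ∀ (g : G) (p q : P), p ≤ q ↔ g • p ≤ g • q)
    (d : P → ℕ) (hd : ∀ p q : P, p < q → d p < d q)
    (g : G) (hfix : ∀ p : P, g • p ≠ p) (hdim : ∀ p : P, d (g • p) = d p)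
    (σ : Set P) (hne : σ.Nonempty) (hσ : IsChain (· ≤ ·) σ) :
    ¬ ∃ α : Set P, IsChain (· ≤ ·) α ∧ σ ⊆ α ∧ g • σ ⊆ α := by
  rintro ⟨α, hα, hσα, hgσα⟩
  obtain ⟨p, hp⟩ := hne
  have hpα : p ∈ α := hσα hp
  have hgpα : g • p ∈ α := hgσα ⟨p, hp, rfl⟩
  have hne' : g • p ≠ p := hfix p
  rcases hα hgpα hpα hne' with h | h
  · exact absurd (hdim p) (Nat.ne_of_lt (hd _ _ (lt_of_le_of_ne h hne')))
  · exact absurd (hdim p) (Nat.ne_of_gt (hd _ _ (lt_of_le_of_ne h (Ne.symm hne'))))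
end

section
/- Every finite topological space is locally path-connected. -/
/-- Every finite topological space is locally path-connected. -/
theorem finite_space_locPathConnected (X : Type*) [Finite X] [TopologicalSpace X] :
    LocPathConnectedSpace X := by
  refine ⟨fun x ↦ ?_⟩
  rw [Filter.hasBasis_iff]
  intro t
  constructor
  · intro ht
    refine ⟨nhdsKer {x}, ⟨isOpen_nhdsKer.mem_nhds (subset_nhdsKer rfl), ⟨x, subset_nhdsKer rfl, fun {y} hy ↦
      ((mem_nhdsKer_singleton.1 hy).joinedIn hy (subset_nhdsKer rfl)).symm⟩⟩,
      nhdsKer_singleton_subset_iff_mem_nhds.2 ht⟩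
  · rintro ⟨s, ⟨hs, -⟩, hst⟩
    exact Filter.mem_of_superset hs hst
end

section
/- A finite topological space is connected if and only if it is path-connected. -/
open Set

lemma isOpen_pathComponent_of_finite {X : Type*} [Finite X] [TopologicalSpace X] (x : X) :
    IsOpen (pathComponent x) := by
  rw [isOpen_iff_mem_nhds]
  intro y hy
  refine Filter.mem_of_superset (nhdsKer_singleton_subset_iff_mem_nhds.1 Subset.rfl) ?_
  intro z hz
  have hzy : z ⤳ y := mem_nhdsKer_singleton.1 hz
  exact mem_pathComponent_iff.2
    ((mem_pathComponent_iff.1 hy).trans ((hzy.joinedIn (mem_univ _) (mem_univ _)).joined).symm)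

lemma isClosed_pathComponent_of_finite {X : Type*} [Finite X] [TopologicalSpace X] (x : X) :
    IsClosed (pathComponent x) := by
  have : (pathComponent x)ᶜ = ⋃ y ∈ (pathComponent x)ᶜ, pathComponent y := by
    ext z
    simp only [mem_iUnion, mem_compl_iff]
    constructor
    · exact fun hz => ⟨z, hz, mem_pathComponent_self z⟩
    · rintro ⟨y, hy, hzy⟩ hz
      exact hy (hzy.symm.mem_pathComponent hz)
  rw [← isOpen_compl_iff, this]
  exact isOpen_biUnion fun y _ => isOpen_pathComponent_of_finite y

/-- A finite topological space is connected if and only if it is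
path-connected. -/
theorem finite_space_connected_iff_pathConnected (X : Type*) [Finite X]
    [TopologicalSpace X] :
    ConnectedSpace X ↔ PathConnectedSpace X := by
  constructor
  · intro h
    obtain ⟨x⟩ := h.toNonempty
    have huniv : pathComponent x = univ :=
      IsClopen.eq_univ ⟨isClosed_pathComponent_of_finite x, isOpen_pathComponent_of_finite x⟩
        ⟨x, mem_pathComponent_self x⟩
    exact ⟨⟨x⟩, fun a b => by
      have ha : a ∈ pathComponent x := huniv ▸ mem_univ a
      have hb : b ∈ pathComponent x := huniv ▸ mem_univ b
      exact (mem_pathComponent_iff.1 ha).symm.trans (mem_pathComponent_iff.1 hb)⟩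
  · intro h
    exact PathConnectedSpace.connectedSpace
end

section
/- Let X be a finite topological space and x ∈ X, and let U_x denote the intersection of all open sets containing x (which is open, being a finite intersection). Then U_x, with the subspace topology, is a contractible topological space. -/
/-- In a finite topological space, the minimal open set `U_x` containing a
point `x` (the intersection of all open sets containing `x`), with the subspace topology,
is contractible. -/
theorem minimal_open_set_contractible (X : Type*) [Finite X] [TopologicalSpace X] (x : X) :
    ContractibleSpace (⋂₀ {U : Set X | IsOpen U ∧ x ∈ U} : Set X) := by
  set S : Set X := ⋂₀ {U : Set X | IsOpen U ∧ x ∈ U} with hS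
  have hxS : x ∈ S := fun U hU => hU.2
  set x₀ : S := ⟨x, hxS⟩ with hx₀
  -- every open subset of S containing x₀ is all of S
  have key : ∀ U : Set S, IsOpen U → x₀ ∈ U → U = Set.univ := by
    intro U hU hxU
    obtain ⟨V, hV, rfl⟩ := isOpen_induced_iff.mp hU
    have hxV : x ∈ V := hxU
    have hSV : S ⊆ V := Set.sInter_subset_of_mem ⟨hV, hxV⟩
    ext ⟨y, hy⟩
    simp only [Set.mem_preimage, Set.mem_univ, iff_true]
    exact hSV hy
  rw [contractible_iff_id_nullhomotopic]
  refine ⟨x₀, ⟨{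
    toFun := fun p => if p.1 = 1 then x₀ else p.2
    continuous_toFun := ?_
    map_zero_left := fun y => by norm_num
    map_one_left := fun y => by norm_num }⟩⟩
  rw [continuous_def]
  intro U hU
  by_cases hx : x₀ ∈ U
  · have hUniv := key U hU hx
    subst hUniv
    simp
  · have hpre : (fun p : unitInterval × S => if p.1 = 1 then x₀ else p.2) ⁻¹' U
        = {(1 : unitInterval)}ᶜ ×ˢ U := by
      ext ⟨t, y⟩
      by_cases ht : t = 1 <;> simp [ht, hx]
    rw [hpre]
    exact isOpen_compl_singleton.prod hU
end

section
/- Let X be a finite topological space, x ∈ X, and let U_x denote the intersection of all open sets containing x. If f, g : [0,1] → X are two paths with f(0) = g(0), f(1) = g(1), and f(t) ∈ U_x and g(t) ∈ U_x for all t ∈ [0,1], then f and g are homotopic relative to their endpoints. -/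
/-- In a finite topological space, any two paths with the same endpoints
whose images lie in the minimal open set `U_x` of a point `x` are homotopic relative to
their endpoints. -/
theorem paths_in_minimal_open_set_homotopic (X : Type*) [Finite X] [TopologicalSpace X]
    (x a b : X) (f g : Path a b)
    (hf : ∀ t : unitInterval, f t ∈ ⋂₀ {U : Set X | IsOpen U ∧ x ∈ U})
    (hg : ∀ t : unitInterval, g t ∈ ⋂₀ {U : Set X | IsOpen U ∧ x ∈ U}) :
    f.Homotopic g := by
  set S : Set X := ⋂₀ {U : Set X | IsOpen U ∧ x ∈ U} with hS
  have hxS : x ∈ S := fun U hU => hU.2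
  -- key property: every open set containing x contains all of S
  have key : ∀ {U : Set X}, IsOpen U → x ∈ U → ∀ y ∈ S, y ∈ U := by
    intro U hU hxU y hy
    exact hy U ⟨hU, hxU⟩
  -- S is contractible: the identity is nullhomotopic via jumping to x at time 1
  have hcontr : ContractibleSpace S := by
    rw [contractible_iff_id_nullhomotopic]
    classical
    refine ⟨⟨x, hxS⟩, ⟨⟨⟨fun p => if p.1 = 1 then ⟨x, hxS⟩ else p.2, ?_⟩, ?_, ?_⟩⟩⟩
    · rw [continuous_def]
      intro V hV
      by_cases hxV : (⟨x, hxS⟩ : S) ∈ V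
      · have : (fun p : unitInterval × S =>
            if p.1 = 1 then (⟨x, hxS⟩ : S) else p.2) ⁻¹' V = Set.univ := by
          ext ⟨t, y⟩
          simp only [Set.mem_preimage, Set.mem_univ, iff_true]
          obtain ⟨W, hW, rfl⟩ := isOpen_induced_iff.mp hV
          have hxW : x ∈ W := hxV
          split
          · exact hxV
          · exact key hW hxW y.1 y.2

        rw [this]; exact isOpen_univ
      · have : (fun p : unitInterval × S =>
            if p.1 = 1 then (⟨x, hxS⟩ : S) else p.2) ⁻¹' V =
            Prod.fst ⁻¹' ({(1 : unitInterval)}ᶜ) ∩ Prod.snd ⁻¹' V := by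
          ext ⟨t, y⟩
          simp only [Set.mem_preimage, Set.mem_inter_iff, Set.mem_compl_iff,
            Set.mem_singleton_iff]
          split
          · rename_i h; simp [h, hxV]
          · rename_i h; simp [h]
        rw [this]
        exact ((isOpen_compl_singleton).preimage continuous_fst).inter
          (hV.preimage continuous_snd)
    · intro y; simp
    · intro y; simp
  have : SimplyConnectedSpace S := SimplyConnectedSpace.ofContractible S
  -- restrict f and g to paths in S
  have hfc : Continuous (fun t => (⟨f t, hf t⟩ : S)) :=
    Continuous.subtype_mk f.continuous _
  have hgc : Continuous (fun t => (⟨g t, hg t⟩ : S)) :=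
    Continuous.subtype_mk g.continuous _
  have haS : a ∈ S := by simpa using hf 0
  have hbS : b ∈ S := by simpa using hf 1
  let f' : Path (⟨a, haS⟩ : S) ⟨b, hbS⟩ :=
    ⟨⟨fun t => ⟨f t, hf t⟩, hfc⟩, by simp, by simp⟩
  let g' : Path (⟨a, haS⟩ : S) ⟨b, hbS⟩ :=
    ⟨⟨fun t => ⟨g t, hg t⟩, hgc⟩, by simp, by simp⟩
  have h' : f'.Homotopic g' := SimplyConnectedSpace.paths_homotopic f' g'
  have := Path.Homotopic.map h' ⟨Subtype.val, continuous_subtype_val⟩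
  convert this using 1
  all_goals rfl
end

section
/- The space Σ_n is path-connected. -/
/-- The underlying set of the finite space `Σ_n`: points `a i` (`i` mod `n`),
`a' j`, `b' j` (`j` mod `2n`), and `b i j`, `c i j` (`i` mod `n`, `j` mod `2n`). -/
inductive SigmaSpace (n : ℕ) : Type
  | a (i : ZMod n)
  | a' (j : ZMod (2 * n))
  | b' (j : ZMod (2 * n))
  | b (i : ZMod n) (j : ZMod (2 * n))
  | c (i : ZMod n) (j : ZMod (2 * n))

namespace SigmaSpace

/-- The generating basic open set `U_x` at each point `x` of `Σ_n`. -/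
def U {n : ℕ} : SigmaSpace n → Set (SigmaSpace n)
  | c i j => {c i j}
  | b i j => {c i (j - 1), b i j, c i j}
  | b' j => insert (b' j) {x | ∃ i, x = c i j}
  | a i => insert (a i) ({x | ∃ j, x = b i j} ∪ {x | ∃ j, x = c i j})
  | a' j => {a' j, b' (j - 1), b' j} ∪ {x | ∃ i, x = b i j ∨ x = c i (j - 1) ∨ x = c i j}

/-- `Σ_n` carries the topology generated by the sets `U_x`. -/
instance (n : ℕ) : TopologicalSpace (SigmaSpace n) :=
  TopologicalSpace.generateFrom (Set.range U)

end SigmaSpace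


namespace SigmaSpace

lemma spec_of_generators {n : ℕ} {x y : SigmaSpace n}
    (h : ∀ p : SigmaSpace n, y ∈ U p → x ∈ U p) : x ⤳ y := by
  rw [specializes_iff_forall_open]
  intro s hs hy
  induction hs with
  | basic t ht => obtain ⟨p, rfl⟩ := ht; exact h p hy
  | univ => trivial
  | inter s t _ _ ihs iht => exact ⟨ihs hy.1, iht hy.2⟩
  | sUnion S _ ih => obtain ⟨t, htS, hyt⟩ := hy; exact ⟨t, htS, ih t htS hyt⟩

lemma spec_c_b {n : ℕ} (i : ZMod n) (j : ZMod (2 * n)) : (c i j : SigmaSpace n) ⤳ b i j := by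
  apply spec_of_generators
  intro p hp
  cases p <;> simp_all [U] <;> aesop

lemma spec_c_b' {n : ℕ} (i : ZMod n) (j : ZMod (2 * n)) :
    (c i (j - 1) : SigmaSpace n) ⤳ b i j := by
  apply spec_of_generators
  intro p hp
  cases p <;> simp_all [U] <;> aesop

lemma spec_c_bp {n : ℕ} (i : ZMod n) (j : ZMod (2 * n)) : (c i j : SigmaSpace n) ⤳ b' j := by
  apply spec_of_generators
  intro p hp
  cases p <;> simp_all [U] <;> aesop

lemma spec_c_a {n : ℕ} (i : ZMod n) (j : ZMod (2 * n)) : (c i j : SigmaSpace n) ⤳ a i := by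
  apply spec_of_generators
  intro p hp
  cases p <;> simp_all [U] <;> aesop

lemma spec_c_a' {n : ℕ} (i : ZMod n) (j : ZMod (2 * n)) : (c i j : SigmaSpace n) ⤳ a' j := by
  apply spec_of_generators
  intro p hp
  cases p <;> simp_all [U] <;> aesop

lemma jd {n : ℕ} {x y : SigmaSpace n} (h : x ⤳ y) : Joined x y :=
  (joinedIn_univ).mp (h.joinedIn (Set.mem_univ _) (Set.mem_univ _))

end SigmaSpace

/-- The space `Σ_n` is path-connected. -/
theorem sigmaSpace_pathConnected (n : ℕ) (hn : 2 ≤ n) :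
    PathConnectedSpace (SigmaSpace n) := by
  classical
  haveI : NeZero (2 * n) := ⟨by omega⟩
  open SigmaSpace in
  have hcj : ∀ (i : ZMod n) (j : ZMod (2 * n)), Joined (c i j : SigmaSpace n) (c 0 j) :=
    fun i j => (jd (spec_c_bp i j)).trans (jd (spec_c_bp 0 j)).symm
  have hc0 : ∀ (k : ℕ), Joined (c 0 (k : ZMod (2 * n)) : SigmaSpace n) (c 0 0) := by
    intro k
    induction k with
    | zero => simp [Joined.refl]
    | succ m ih =>
      have h1 : (c 0 ((m : ZMod (2*n)) + 1 - 1) : SigmaSpace n) ⤳ b 0 ((m : ZMod (2*n)) + 1) :=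
        spec_c_b' 0 _
      have h2 : (c 0 ((m : ZMod (2*n)) + 1) : SigmaSpace n) ⤳ b 0 ((m : ZMod (2*n)) + 1) :=
        spec_c_b 0 _
      simp only [add_sub_cancel_right] at h1
      have : Joined (c 0 ((m : ZMod (2*n)) + 1) : SigmaSpace n) (c 0 (m : ZMod (2*n))) :=
        (jd h2).trans (jd h1).symm
      push_cast
      exact this.trans ih
  have hc : ∀ (i : ZMod n) (j : ZMod (2 * n)), Joined (c i j : SigmaSpace n) (c 0 0) := by
    intro i j
    obtain ⟨k, rfl⟩ := ZMod.natCast_zmod_surjective (n := 2 * n) j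
    exact (hcj i _).trans (hc0 k)
  have key : ∀ x : SigmaSpace n, Joined x (c 0 0) := by
    intro x
    cases x with
    | a i => exact (jd (spec_c_a i 0)).symm.trans (hc i 0)
    | a' j => exact (jd (spec_c_a' 0 j)).symm.trans (hc 0 j)
    | b' j => exact (jd (spec_c_bp 0 j)).symm.trans (hc 0 j)
    | b i j => exact (jd (spec_c_b i j)).symm.trans (hc i j)
    | c i j => exact hc i j
  exact ⟨⟨c 0 0⟩, fun x y => (key x).trans (key y).symm⟩
end

section
/- The map g : Σ_n → Σ_n defined by g(a_i) = a_{i+1}, g(a'_j) = a'_{j+2}, g(b'_j) = b'_{j+2}, g(b_{i,j}) = b_{i+1,j+2}, g(c_{i,j}) = c_{i+1,j+2} (first indices mod n, second indices mod 2n) is a homeomorphism of Σ_n satisfying gⁿ = id, and the resulting action of ℤ/nℤ on Σ_n is properly discontinuous in the strong sense: for every x ∈ Σ_n and every k with 1 ≤ k ≤ n−1, g^k(U_x) ∩ U_x = ∅, where U_x is the generating basic open set at x. -/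
namespace SigmaSpace

/-- The rotation map `g : Σ_n → Σ_n`. -/
def rot {n : ℕ} : SigmaSpace n → SigmaSpace n
  | a i => a (i + 1)
  | a' j => a' (j + 2)
  | b' j => b' (j + 2)
  | b i j => b (i + 1) (j + 2)
  | c i j => c (i + 1) (j + 2)

end SigmaSpace

namespace SigmaSpace

def rotInv {n : ℕ} : SigmaSpace n → SigmaSpace n
  | a i => a (i - 1)
  | a' j => a' (j - 2)
  | b' j => b' (j - 2)
  | b i j => b (i - 1) (j - 2)
  | c i j => c (i - 1) (j - 2)

lemma rotInv_rot {n : ℕ} (x : SigmaSpace n) : rotInv (rot x) = x := by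
  cases x <;> simp [rot, rotInv]

lemma rot_rotInv {n : ℕ} (x : SigmaSpace n) : rot (rotInv x) = x := by
  cases x <;> simp [rot, rotInv]

lemma aux_sub {m : ℕ} (a b d e : ZMod m) : a + d = b + d - e ↔ a = b - e := by
  constructor <;> intro h <;> linear_combination h

lemma mem_U_rot {n : ℕ} (x y : SigmaSpace n) : rot y ∈ U (rot x) ↔ y ∈ U x := by
  cases x <;> cases y <;> simp [U, rot, aux_sub]
  constructor
  · rintro ⟨i0, (⟨h1, h2⟩ | ⟨h1, h2⟩)⟩
    exacts [⟨_, Or.inl ⟨rfl, h2⟩⟩, ⟨_, Or.inr ⟨rfl, h2⟩⟩]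
  · rintro ⟨i0, (⟨h1, h2⟩ | ⟨h1, h2⟩)⟩
    exacts [⟨_, Or.inl ⟨rfl, h2⟩⟩, ⟨_, Or.inr ⟨rfl, h2⟩⟩]


lemma rot_surjective {n : ℕ} : Function.Surjective (rot : SigmaSpace n → SigmaSpace n) :=
  fun x => ⟨rotInv x, rot_rotInv x⟩

lemma rot_image_U {n : ℕ} (x : SigmaSpace n) : rot '' U x = U (rot x) := by
  ext z
  constructor
  · rintro ⟨w, hw, rfl⟩; exact (mem_U_rot x w).mpr hw
  · intro hz
    obtain ⟨y, rfl⟩ := rot_surjective z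
    exact ⟨y, (mem_U_rot x y).mp hz, rfl⟩

lemma isOpen_U {n : ℕ} (x : SigmaSpace n) : IsOpen (U x) :=
  TopologicalSpace.isOpen_generateFrom_of_mem ⟨x, rfl⟩

lemma rot_preimage_U {n : ℕ} (x : SigmaSpace n) : rot ⁻¹' U x = U (rotInv x) := by
  ext y
  have := mem_U_rot (rotInv x) y
  rw [rot_rotInv] at this
  exact this

lemma continuous_rot {n : ℕ} : Continuous (rot : SigmaSpace n → SigmaSpace n) := by
  rw [instTopologicalSpace, continuous_generateFrom_iff]
  rintro s ⟨x, rfl⟩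
  rw [rot_preimage_U]
  exact isOpen_U _

lemma rotInv_preimage_U {n : ℕ} (x : SigmaSpace n) : rotInv ⁻¹' U x = U (rot x) := by
  ext y
  constructor
  · intro hy
    have : rot (rotInv y) ∈ U (rot x) := (mem_U_rot x (rotInv y)).mpr hy
    rwa [rot_rotInv] at this
  · intro hy
    have := (mem_U_rot x (rotInv y))
    rw [rot_rotInv] at this
    exact this.mp hy

lemma continuous_rotInv {n : ℕ} : Continuous (rotInv : SigmaSpace n → SigmaSpace n) := by
  rw [instTopologicalSpace, continuous_generateFrom_iff]
  rintro s ⟨x, rfl⟩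
  rw [rotInv_preimage_U]
  exact isOpen_U _

def rotHomeo {n : ℕ} : SigmaSpace n ≃ₜ SigmaSpace n where
  toFun := rot
  invFun := rotInv
  left_inv := rotInv_rot
  right_inv := rot_rotInv
  continuous_toFun := continuous_rot
  continuous_invFun := continuous_rotInv

lemma iter_a {n : ℕ} (k : ℕ) (i : ZMod n) : rot^[k] (a i) = a (i + (k : ZMod n)) := by
  induction k with
  | zero => simp
  | succ k ih =>
    rw [Function.iterate_succ_apply', ih]
    show a _ = a _
    congr 1
    push_cast
    ring

lemma iter_a' {n : ℕ} (k : ℕ) (j : ZMod (2 * n)) : rot^[k] (a' j) = a' (j + 2 * (k : ZMod (2 * n))) := by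
  induction k with
  | zero => simp
  | succ k ih =>
    rw [Function.iterate_succ_apply', ih]
    show a' _ = a' _
    congr 1
    push_cast
    ring

lemma iter_b' {n : ℕ} (k : ℕ) (j : ZMod (2 * n)) : rot^[k] (b' j) = b' (j + 2 * (k : ZMod (2 * n))) := by
  induction k with
  | zero => simp
  | succ k ih =>
    rw [Function.iterate_succ_apply', ih]
    show b' _ = b' _
    congr 1
    push_cast
    ring

lemma iter_b {n : ℕ} (k : ℕ) (i : ZMod n) (j : ZMod (2 * n)) :
    rot^[k] (b i j) = b (i + (k : ZMod n)) (j + 2 * (k : ZMod (2 * n))) := by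
  induction k with
  | zero => simp
  | succ k ih =>
    rw [Function.iterate_succ_apply', ih]
    show b _ _ = b _ _
    congr 1 <;> push_cast <;> ring

lemma iter_c {n : ℕ} (k : ℕ) (i : ZMod n) (j : ZMod (2 * n)) :
    rot^[k] (c i j) = c (i + (k : ZMod n)) (j + 2 * (k : ZMod (2 * n))) := by
  induction k with
  | zero => simp
  | succ k ih =>
    rw [Function.iterate_succ_apply', ih]
    show c _ _ = c _ _
    congr 1 <;> push_cast <;> ring

lemma iter_image_U {n : ℕ} (k : ℕ) (x : SigmaSpace n) :
    rot^[k] '' U x = U (rot^[k] x) := by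
  induction k with
  | zero => simp
  | succ k ih =>
    rw [Function.iterate_succ', Set.image_comp, ih, rot_image_U]
    rfl

end SigmaSpace

/-- The map `g` is a homeomorphism of `Σ_n` with `gⁿ = id`, and the
induced `ℤ/nℤ`-action is properly discontinuous in the strong sense that
`g^k(U_x) ∩ U_x = ∅` for every point `x` and every `1 ≤ k ≤ n - 1`. -/
theorem sigmaSpace_rot_homeomorph_properlyDiscontinuous (n : ℕ) (hn : 2 ≤ n) :
    IsHomeomorph (SigmaSpace.rot : SigmaSpace n → SigmaSpace n) ∧
    (SigmaSpace.rot)^[n] = (id : SigmaSpace n → SigmaSpace n) ∧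
    ∀ (x : SigmaSpace n) (k : ℕ), 1 ≤ k → k ≤ n - 1 →
      (SigmaSpace.rot)^[k] '' SigmaSpace.U x ∩ SigmaSpace.U x = ∅ := by
  haveI : NeZero n := ⟨by omega⟩
  have h2n : (2 : ZMod (2 * n)) * (n : ℕ) = 0 := by
    have := ZMod.natCast_self (2 * n)
    push_cast at this ⊢
    linear_combination this
  refine ⟨SigmaSpace.rotHomeo.isHomeomorph, ?_, ?_⟩
  · funext x
    cases x <;>
      simp [SigmaSpace.iter_a, SigmaSpace.iter_a', SigmaSpace.iter_b', SigmaSpace.iter_b,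
        SigmaSpace.iter_c, ZMod.natCast_self, h2n]
  · intro x k hk1 hk2
    have hk0 : (k : ZMod n) ≠ 0 := by
      intro h
      rw [ZMod.natCast_eq_zero_iff] at h
      exact absurd (Nat.le_of_dvd (by omega) h) (by omega)
    have e : (2 : ZMod (2 * n)) * (k : ℕ) = ((2 * k : ℕ) : ZMod (2 * n)) := by
      push_cast; ring
    have h2k0 : (2 : ZMod (2 * n)) * (k : ℕ) ≠ 0 := by
      rw [e]
      intro h
      rw [ZMod.natCast_eq_zero_iff] at h
      exact absurd (Nat.le_of_dvd (by omega) h) (by omega)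
    have h2k1 : (2 : ZMod (2 * n)) * (k : ℕ) ≠ 1 := by
      rw [e, show (1 : ZMod (2 * n)) = ((1 : ℕ) : ZMod (2 * n)) by simp]
      intro h
      rw [ZMod.natCast_eq_natCast_iff] at h
      have h' : 2 * k % (2 * n) = 1 % (2 * n) := h
      have e1 : 2 * k % (2 * n) = 2 * k := Nat.mod_eq_of_lt (by omega)
      have e2 : 1 % (2 * n) = 1 := Nat.mod_eq_of_lt (by omega)
      omega
    have h2km : (2 : ZMod (2 * n)) * (k : ℕ) ≠ -1 := by
      intro h
      have h' : ((2 * k + 1 : ℕ) : ZMod (2 * n)) = 0 := by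
        push_cast
        linear_combination h
      rw [ZMod.natCast_eq_zero_iff] at h'
      exact absurd (Nat.le_of_dvd (by omega) h') (by omega)
    rw [SigmaSpace.iter_image_U]
    rw [Set.eq_empty_iff_forall_notMem]
    rintro z ⟨h1, h2⟩
    cases x with
    | a i =>
      rw [SigmaSpace.iter_a] at h1
      cases z <;> simp [SigmaSpace.U] at h1 h2
      all_goals exact hk0 (by linear_combination h2 - h1)
    | a' j =>
      rw [SigmaSpace.iter_a'] at h1
      cases z with
      | a' j' =>
        simp [SigmaSpace.U] at h1 h2
        exact h2k0 (by linear_combination h2 - h1)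
      | b' j' =>
        simp [SigmaSpace.U] at h1 h2
        rcases h1 with h1 | h1 <;> rcases h2 with h2 | h2
        exacts [h2k0 (by linear_combination h2 - h1), h2k1 (by linear_combination h2 - h1),
          h2km (by linear_combination h2 - h1), h2k0 (by linear_combination h2 - h1)]
      | b i' j' =>
        simp [SigmaSpace.U] at h1 h2
        exact h2k0 (by linear_combination h2 - h1)
      | c i' j' =>
        simp [SigmaSpace.U] at h1 h2
        obtain ⟨i1, h1⟩ := h1
        obtain ⟨i2, h2⟩ := h2
        rcases h1 with ⟨-, h1⟩ | ⟨-, h1⟩ <;> rcases h2 with ⟨-, h2⟩ | ⟨-, h2⟩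
        exacts [h2k0 (by linear_combination h2 - h1), h2k1 (by linear_combination h2 - h1),
          h2km (by linear_combination h2 - h1), h2k0 (by linear_combination h2 - h1)]
      | a i' => simp [SigmaSpace.U] at h1
    | b' j =>
      rw [SigmaSpace.iter_b'] at h1
      cases z <;> simp [SigmaSpace.U] at h1 h2
      all_goals exact h2k0 (by linear_combination h2 - h1)
    | b i j =>
      rw [SigmaSpace.iter_b] at h1
      cases z with
      | b i' j' =>
        simp [SigmaSpace.U] at h1 h2
        exact hk0 (by linear_combination h2.1 - h1.1)
      | c i' j' =>
        simp [SigmaSpace.U] at h1 h2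
        rcases h1 with ⟨h1, -⟩ | ⟨h1, -⟩ <;> rcases h2 with ⟨h2, -⟩ | ⟨h2, -⟩ <;>
          exact hk0 (by linear_combination h2 - h1)
      | a i' => simp [SigmaSpace.U] at h1
      | a' j' => simp [SigmaSpace.U] at h1
      | b' j' => simp [SigmaSpace.U] at h1
    | c i j =>
      rw [SigmaSpace.iter_c] at h1
      cases z <;> simp [SigmaSpace.U] at h1 h2
      exact hk0 (by linear_combination h2.1 - h1.1)
end
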